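/- arXiv:1107.1907 — 6 statements merged into one kernel-verified Lean document; each statement's English description precedes it below -/
import Mathlib

section
/- Let M be a commutative cancellative monoid and F ⊆ M a face (a submonoid such that a + b ∈ F implies a ∈ F and b ∈ F). If M is a toric monoid (i.e., finitely generated, torsion-free, injecting into and saturated in its Grothendieck group) and F is a face of M, then the induced map Fᵍᵖ → Mᵍᵖ on Grothendieck groups is injective and its image is a saturated subgroup, hence a direct summand of the free abelian group Mᵍᵖ. -/
/-- Let `M` be a toric monoid, realized as a submonoid of its Grothendieck group `G = Mᵍᵖ`
(a finitely generated free abelian group which `M` generates), with `M` finitely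
generated and saturated in `G`.  If `F` is a face of `M`, then `Fᵍᵖ → Mᵍᵖ` is injective
(here `Fᵍᵖ` is realized as the subgroup of `G` generated by `F`, so the map is the
inclusion) with saturated image, hence a direct summand of the free abelian group `G`. -/
theorem stmt_1 {G : Type} [AddCommGroup G] [Module.Free ℤ G] [Module.Finite ℤ G]
    (M : AddSubmonoid G)
    (hMgen : AddSubgroup.closure (M : Set G) = ⊤)
    (hMfg : M.FG)
    (hMsat : ∀ (n : ℕ) (x : G), 0 < n → n • x ∈ M → x ∈ M)
    (F : AddSubmonoid G) (hFM : F ≤ M)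
    (hface : ∀ a b : G, a ∈ M → b ∈ M → a + b ∈ F → a ∈ F ∧ b ∈ F) :
    -- the subgroup generated by `F` is saturated in `G = Mᵍᵖ` ...
    (∀ (n : ℕ) (x : G), 0 < n → n • x ∈ AddSubgroup.closure (F : Set G) →
      x ∈ AddSubgroup.closure (F : Set G)) ∧
    -- ... hence a direct summand
    ∃ K : AddSubgroup G, IsCompl (AddSubgroup.closure (F : Set G)) K := by
  set H := AddSubgroup.closure (F : Set G) with hH
  -- every element of H is a difference of two elements of F
  have hmem : ∀ x ∈ H, ∃ a ∈ F, ∃ b ∈ F, x = a - b := by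
    intro x hx
    induction hx using AddSubgroup.closure_induction with
    | mem y hy => exact ⟨y, hy, 0, F.zero_mem, by simp⟩
    | zero => exact ⟨0, F.zero_mem, 0, F.zero_mem, by simp⟩
    | add y z hy hz ihy ihz =>
        obtain ⟨a, ha, b, hb, rfl⟩ := ihy
        obtain ⟨c, hc, d, hd, rfl⟩ := ihz
        exact ⟨a + c, F.add_mem ha hc, b + d, F.add_mem hb hd, by abel⟩
    | neg y hy ihy =>
        obtain ⟨a, ha, b, hb, rfl⟩ := ihy
        exact ⟨b, hb, a, ha, by abel⟩
  -- saturation of H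
  have hsat : ∀ (n : ℕ) (x : G), 0 < n → n • x ∈ H → x ∈ H := by
    intro n x hn hx
    obtain ⟨m, rfl⟩ : ∃ m, n = m + 1 := ⟨n - 1, by omega⟩
    obtain ⟨a, ha, b, hb, heq⟩ := hmem _ hx
    have key : (m + 1) • (x + b) = a + m • b := by
      rw [smul_add, heq, succ_nsmul]
      abel
    have hkeyF : (m + 1) • (x + b) ∈ F := by
      rw [key]; exact F.add_mem ha (AddSubmonoid.nsmul_mem F hb m)
    have hxbM : x + b ∈ M := hMsat (m + 1) (x + b) (by omega) (hFM hkeyF)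
    have hxbF : x + b ∈ F := by
      have := hface (m • (x + b)) (x + b) (AddSubmonoid.nsmul_mem M hxbM m) hxbM
        (by rwa [← succ_nsmul])
      exact this.2
    have : (x + b) - b ∈ H :=
      sub_mem (AddSubgroup.subset_closure hxbF) (AddSubgroup.subset_closure hb)
    simpa using this
  refine ⟨hsat, ?_⟩
  -- direct summand part
  set Hm : Submodule ℤ G := AddSubgroup.toIntSubmodule H with hHm
  haveI : NoZeroSMulDivisors ℤ (G ⧸ Hm) := by
    refine ⟨fun {c y} hcy => ?_⟩
    by_cases hc : c = 0
    · exact Or.inl hc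
    · right
      obtain ⟨x, rfl⟩ := Submodule.Quotient.mk_surjective Hm y
      have hx : c • x ∈ Hm := by
        rwa [← Submodule.Quotient.mk_smul, Submodule.Quotient.mk_eq_zero] at hcy
      have hxH : c • x ∈ H := hx
      have hnat : (c.natAbs : ℕ) • x ∈ H := by
        rcases Int.natAbs_eq c with h | h
        · rw [← natCast_zsmul]
          rw [h] at hxH; exact hxH
        · rw [← natCast_zsmul, ← neg_neg ((c.natAbs : ℤ) • x), ← neg_zsmul, ← h]
          exact neg_mem hxH
      have : x ∈ H := hsat c.natAbs x (Int.natAbs_pos.mpr hc) hnat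
      rwa [Submodule.Quotient.mk_eq_zero]
  haveI : Module.Finite ℤ (G ⧸ Hm) := Module.Finite.quotient ℤ Hm
  haveI : Module.Free ℤ (G ⧸ Hm) := Module.free_of_finite_type_torsion_free'
  obtain ⟨s, hs⟩ := Module.projective_lifting_property Hm.mkQ LinearMap.id
    (Submodule.mkQ_surjective Hm)
  set π : G →ₗ[ℤ] G := LinearMap.id - s ∘ₗ Hm.mkQ with hπ
  have hπmem : ∀ y : G, π y ∈ Hm := by
    intro y
    have : Hm.mkQ (π y) = 0 := by
      have h1 : Hm.mkQ (s (Hm.mkQ y)) = Hm.mkQ y := by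
        have := congrArg (fun f => f (Hm.mkQ y)) hs
        simpa using this
      simp only [hπ, LinearMap.sub_apply, map_sub, LinearMap.id_apply,
        LinearMap.comp_apply]
      rw [h1, sub_self]
    rwa [Submodule.mkQ_apply, Submodule.Quotient.mk_eq_zero] at this
  set f : G →ₗ[ℤ] Hm := LinearMap.codRestrict Hm π hπmem with hf
  have hfix : ∀ x : Hm, f x = x := by
    intro x
    ext
    have hx0 : Hm.mkQ (x : G) = 0 := by
      rw [Submodule.mkQ_apply, Submodule.Quotient.mk_eq_zero]; exact x.2
    simp [hf, hπ, hx0]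
  have hcompl : IsCompl Hm (LinearMap.ker f) := LinearMap.isCompl_of_proj hfix
  refine ⟨(LinearMap.ker f).toAddSubgroup, ?_⟩
  have := AddSubgroup.toIntSubmodule (M := G) |>.symm.isCompl hcompl
  simpa [hHm] using this
end

section
/- Let F be a face of a toric monoid M. Then there exists a group homomorphism χ : Mᵍᵖ → ℤ such that χ(m) ≥ 0 for all m ∈ M and χ(m) = 0 if and only if m ∈ F (for m ∈ M). -/
open Finset

theorem farkas_fin {V : Type} [AddCommGroup V] [Module ℚ V] :
    ∀ (k : ℕ) (v : Fin k → V) (w : V),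
      (¬ ∃ c : Fin k → ℚ, (∀ i, 0 ≤ c i) ∧ w = ∑ i, c i • v i) →
      ∃ χ : V →ₗ[ℚ] ℚ, (∀ i, 0 ≤ χ (v i)) ∧ χ w < 0 := by
  intro k
  induction k with
  | zero =>
    intro v w hw
    have hw0 : w ≠ 0 := by
      intro h
      exact hw ⟨0, fun i => le_refl 0, by simp [h]⟩
    have : ¬ ∀ φ : Module.Dual ℚ V, φ w = 0 := by
      rw [Module.forall_dual_apply_eq_zero_iff]; exact hw0
    push_neg at this
    obtain ⟨φ, hφ⟩ := this
    rcases lt_or_gt_of_ne hφ with h | h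
    · exact ⟨φ, fun i => i.elim0, h⟩
    · exact ⟨-φ, fun i => i.elim0, by simpa using h⟩
  | succ k ih =>
    intro v w hw
    set v' : Fin k → V := fun i => v i.castSucc with hv'
    set vk : V := v (Fin.last k) with hvk
    have h1 : ¬ ∃ c : Fin k → ℚ, (∀ i, 0 ≤ c i) ∧ w = ∑ i, c i • v' i := by
      rintro ⟨c, hc, hsum⟩
      refine hw ⟨Fin.snoc c 0, ?_, ?_⟩
      · intro i
        refine Fin.lastCases ?_ ?_ i <;> simp [Fin.snoc_last, Fin.snoc_castSucc, hc]
      · rw [Fin.sum_univ_castSucc]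
        simp [Fin.snoc_last, Fin.snoc_castSucc, hsum]
        rfl
    obtain ⟨χ, hχ, hχw⟩ := ih v' w h1
    by_cases hk : 0 ≤ χ vk
    · refine ⟨χ, ?_, hχw⟩
      intro i
      refine Fin.lastCases ?_ ?_ i
      · exact hk
      · exact hχ
    · push_neg at hk
      have hknz : χ vk ≠ 0 := ne_of_lt hk
      set proj : V →ₗ[ℚ] V := LinearMap.id - (χ vk)⁻¹ • (χ.smulRight vk) with hproj
      have hproj_apply : ∀ x, proj x = x - (χ x / χ vk) • vk := by
        intro x
        simp [hproj, LinearMap.smulRight_apply, smul_smul, div_eq_inv_mul]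
      have hker : ∀ x, χ (proj x) = 0 := by
        intro x
        rw [hproj_apply]
        simp [map_sub, map_smul, smul_eq_mul]
        field_simp
        ring
      have h2 : ¬ ∃ c : Fin k → ℚ, (∀ i, 0 ≤ c i) ∧ proj w = ∑ i, c i • (proj (v' i)) := by
        rintro ⟨c, hc, hsum⟩
        set t : ℚ := χ w / χ vk - ∑ i, c i * (χ (v' i) / χ vk) with ht
        have hwid : w = (∑ i, c i • v' i) + t • vk := by
          have expand : ∑ i, c i • (proj (v' i))
              = (∑ i, c i • v' i) - (∑ i, c i * (χ (v' i) / χ vk)) • vk := by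
            rw [Finset.sum_smul, ← Finset.sum_sub_distrib]
            refine Finset.sum_congr rfl fun i _ => ?_
            rw [hproj_apply, smul_sub, smul_smul]
          rw [hproj_apply, expand] at hsum
          rw [ht]
          linear_combination (norm := module) hsum
        have htpos : 0 ≤ t := by
          have h1' : 0 < χ w / χ vk := div_pos_of_neg_of_neg hχw hk
          have h2' : ∑ i, c i * (χ (v' i) / χ vk) ≤ 0 := by
            refine Finset.sum_nonpos fun i _ => ?_
            exact mul_nonpos_of_nonneg_of_nonpos (hc i)
              (div_nonpos_of_nonneg_of_nonpos (hχ i) (le_of_lt hk))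
          rw [ht]; linarith
        refine hw ⟨Fin.snoc c t, ?_, ?_⟩
        · intro i
          refine Fin.lastCases ?_ ?_ i <;> simp [Fin.snoc_last, Fin.snoc_castSucc, hc, htpos]
        · rw [Fin.sum_univ_castSucc]
          simp only [Fin.snoc_last, Fin.snoc_castSucc]
          exact hwid
      obtain ⟨ψ, hψ, hψw⟩ := ih (fun i => proj (v' i)) (proj w) h2
      refine ⟨ψ.comp proj, ?_, hψw⟩
      intro i
      refine Fin.lastCases ?_ ?_ i
      · have : proj vk = 0 := by
          rw [hproj_apply]; field_simp
          simp
        simp [LinearMap.comp_apply, ← hvk, this]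
      · intro j
        exact hψ j

theorem farkas_fintype {V : Type} [AddCommGroup V] [Module ℚ V]
    {α : Type} [Fintype α] (v : α → V) (w : V)
    (h : ¬ ∃ c : α → ℚ, (∀ i, 0 ≤ c i) ∧ w = ∑ i, c i • v i) :
    ∃ χ : V →ₗ[ℚ] ℚ, (∀ i, 0 ≤ χ (v i)) ∧ χ w < 0 := by
  classical
  let e := Fintype.equivFin α
  have h' : ¬ ∃ c : Fin (Fintype.card α) → ℚ, (∀ i, 0 ≤ c i) ∧
      w = ∑ i, c i • (v (e.symm i)) := by
    rintro ⟨c, hc, hsum⟩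
    refine h ⟨fun a => c (e a), fun a => hc _, ?_⟩
    rw [hsum]
    exact (Fintype.sum_equiv e _ _ (fun a => by simp)).symm
  obtain ⟨χ, hχ, hχw⟩ := farkas_fin _ _ w h'
  exact ⟨χ, fun a => by simpa using hχ (e a), hχw⟩

theorem exists_common_den {α : Type} [Fintype α] (q : α → ℚ) :
    ∃ D : ℕ, 0 < D ∧ ∀ i, ∃ z : ℤ, (z : ℚ) = q i * D ∧ (0 ≤ q i → 0 ≤ z) := by
  classical
  refine ⟨∏ i, (q i).den, Finset.prod_pos (fun i _ => (q i).pos), fun i => ?_⟩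
  obtain ⟨e, he⟩ := Finset.dvd_prod_of_mem (fun i => (q i).den) (Finset.mem_univ i)
  refine ⟨(q i).num * e, ?_, fun hq => ?_⟩
  · have h1 : ((q i).num : ℚ) = q i * (q i).den := (Rat.mul_den_eq_num (q i)).symm
    rw [he]
    push_cast
    rw [h1]
    ring
  · exact mul_nonneg (Rat.num_nonneg.mpr hq) (Int.natCast_nonneg e)

section FaceLemmas

variable {G : Type} [AddCommGroup G] {M F : AddSubmonoid G}

lemma nsmul_mem_face (hface : ∀ a b : G, a ∈ M → b ∈ M → a + b ∈ F → a ∈ F ∧ b ∈ F)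
    {n : ℕ} (hn : n ≠ 0) {s : G} (hs : s ∈ M) (h : n • s ∈ F) : s ∈ F := by
  obtain ⟨k, rfl⟩ := Nat.exists_eq_succ_of_ne_zero hn
  rw [succ_nsmul] at h
  exact (hface _ _ (AddSubmonoid.nsmul_mem M hs k) hs h).2

lemma sum_mem_face (hface : ∀ a b : G, a ∈ M → b ∈ M → a + b ∈ F → a ∈ F ∧ b ∈ F)
    (T : Finset G) (hT : ∀ s ∈ T, s ∈ M) (c : G → ℕ)
    (h : (∑ s ∈ T, c s • s) ∈ F) : ∀ s ∈ T, c s ≠ 0 → s ∈ F := by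
  classical
  induction T using Finset.induction_on with
  | empty => simp
  | @insert a T' ha ih =>
    rw [Finset.sum_insert ha] at h
    have haM : c a • a ∈ M := AddSubmonoid.nsmul_mem M (hT a (Finset.mem_insert_self a T')) _
    have hsM : (∑ s ∈ T', c s • s) ∈ M :=
      AddSubmonoid.sum_mem M fun s hs =>
        AddSubmonoid.nsmul_mem M (hT s (Finset.mem_insert_of_mem hs)) _
    obtain ⟨h1, h2⟩ := hface _ _ haM hsM h
    intro s hs hcs
    rcases Finset.mem_insert.mp hs with rfl | hs'
    · exact nsmul_mem_face hface hcs (hT s (Finset.mem_insert_self s T')) h1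
    · exact ih (fun x hx => hT x (Finset.mem_insert_of_mem hx)) h2 s hs' hcs

end FaceLemmas

section Separation

theorem exists_chi_gen {G : Type} [AddCommGroup G] [Module.Free ℤ G] [Module.Finite ℤ G]
    (M F : AddSubmonoid G)
    (hface : ∀ a b : G, a ∈ M → b ∈ M → a + b ∈ F → a ∈ F ∧ b ∈ F)
    (T : Finset G) (hTM : ∀ s ∈ T, s ∈ M)
    (g₀ : G) (hg₀T : g₀ ∈ T) (hg₀F : g₀ ∉ F) :
    ∃ χ : G →+ ℤ, (∀ s ∈ T, 0 ≤ χ s) ∧ (∀ f ∈ T, f ∈ F → χ f = 0) ∧ 0 < χ g₀ := by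
  classical
  set ι := Module.Free.ChooseBasisIndex ℤ G with hι
  set b : Module.Basis ι ℤ G := Module.Free.chooseBasis ℤ G with hb
  let eQ : G →+ (ι → ℚ) :=
    AddMonoidHom.mk' (fun g i => ((b.repr g) i : ℚ)) (by
      intro x y; funext i; simp [map_add])
  have heQ_apply : ∀ g i, eQ g i = ((b.repr g) i : ℚ) := fun g i => rfl
  have heQinj : Function.Injective eQ := by
    intro x y hxy
    apply b.repr.injective
    ext i
    have h := congrFun hxy i
    rw [heQ_apply, heQ_apply] at h
    exact_mod_cast h
  set Tf : Finset G := T.filter (· ∈ F) with hTf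
  set α := ({x // x ∈ T} ⊕ {x // x ∈ Tf}) with hα
  set v : α → (ι → ℚ) := Sum.elim (fun s => eQ s.1) (fun f => - eQ f.1) with hv
  have hnc : ¬ ∃ c : α → ℚ, (∀ i, 0 ≤ c i) ∧ (-(eQ g₀) = ∑ i, c i • v i) := by
    rintro ⟨c, hc, hsum⟩
    rw [Fintype.sum_sum_type] at hsum
    obtain ⟨D, hD, hden⟩ := exists_common_den c
    choose z hz hznn using hden
    set n : α → ℕ := fun i => (z i).toNat with hn
    have hncast : ∀ i, ((n i : ℕ) : ℚ) = c i * D := by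
      intro i
      have h2 : ((z i).toNat : ℤ) = z i := Int.toNat_of_nonneg (hznn i (hc i))
      rw [hn]
      rw [← hz i, ← h2]
      push_cast
      ring
    -- key equation in ι → ℚ
    have key : ((D • g₀ + ∑ s : {x // x ∈ T}, n (Sum.inl s) • (s : G)) : G) =
        ∑ f : {x // x ∈ Tf}, n (Sum.inr f) • (f : G) := by
      apply heQinj
      rw [map_add, map_nsmul, map_sum, map_sum]
      simp_rw [map_nsmul]
      rw [← Nat.cast_smul_eq_nsmul ℚ D (eQ g₀)]
      simp_rw [← Nat.cast_smul_eq_nsmul ℚ, hncast]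
      have hsum' := congrArg (fun x => (D : ℚ) • x) hsum
      simp only [hv, Sum.elim_inl, Sum.elim_inr, smul_add, Finset.smul_sum, smul_smul,
        smul_neg, Finset.sum_neg_distrib, mul_comm ((D : ℚ))] at hsum'
      linear_combination (norm := module) -hsum'
    have hBF : (∑ f : {x // x ∈ Tf}, n (Sum.inr f) • (f : G)) ∈ F := by
      refine AddSubmonoid.sum_mem F fun f _ => AddSubmonoid.nsmul_mem F ?_ _
      exact (Finset.mem_filter.mp f.2).2
    rw [key.symm] at hBF
    have hAM : (D • g₀) ∈ M := AddSubmonoid.nsmul_mem M (hTM g₀ hg₀T) _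
    have hSM : (∑ s : {x // x ∈ T}, n (Sum.inl s) • (s : G)) ∈ M :=
      AddSubmonoid.sum_mem M fun s _ => AddSubmonoid.nsmul_mem M (hTM s.1 s.2) _
    obtain ⟨hDg₀, -⟩ := hface _ _ hAM hSM hBF
    exact hg₀F (nsmul_mem_face hface hD.ne' (hTM g₀ hg₀T) hDg₀)
  obtain ⟨χ₀, hχ₀, hχ₀w⟩ := farkas_fintype v (-(eQ g₀)) hnc
  have hpos : 0 < χ₀ (eQ g₀) := by
    rw [map_neg] at hχ₀w; linarith
  have hTpos : ∀ s ∈ T, 0 ≤ χ₀ (eQ s) := fun s hs => hχ₀ (Sum.inl ⟨s, hs⟩)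
  have hF0 : ∀ f ∈ T, f ∈ F → χ₀ (eQ f) = 0 := by
    intro f hf hfF
    have h1 : 0 ≤ χ₀ (eQ f) := hTpos f hf
    have h2 : 0 ≤ χ₀ (-(eQ f)) := hχ₀ (Sum.inr ⟨f, Finset.mem_filter.mpr ⟨hf, hfF⟩⟩)
    rw [map_neg] at h2
    linarith
  -- integerize χ₀
  set r : ι → ℚ := fun i => χ₀ ((Pi.single i (1:ℚ) : ι → ℚ)) with hr
  have hrepr : ∀ g : G, χ₀ (eQ g) = ∑ i, ((b.repr g) i : ℚ) * r i := by
    intro g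
    have heq : eQ g = ∑ i, ((b.repr g) i : ℚ) • (Pi.single i (1:ℚ) : ι → ℚ) := by
      funext j
      rw [Finset.sum_apply]
      simp only [Pi.smul_apply, Pi.single_apply, smul_eq_mul, mul_ite, mul_one, mul_zero]
      rw [Finset.sum_ite_eq Finset.univ j (fun i => ((b.repr g) i : ℚ))]
      simp [heQ_apply]
    rw [heq, map_sum]
    simp_rw [map_smul, smul_eq_mul]
    rfl
  obtain ⟨D', hD', hden'⟩ := exists_common_den r
  choose z hz hznn using hden'
  set χ : G →+ ℤ := AddMonoidHom.mk' (fun g => ∑ i, (b.repr g) i * z i) (by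
    intro x y
    simp [map_add, add_mul, Finset.sum_add_distrib]) with hχdef
  have hχ_apply : ∀ g, χ g = ∑ i, (b.repr g) i * z i := fun g => rfl
  have hcast : ∀ g : G, ((χ g : ℤ) : ℚ) = D' * χ₀ (eQ g) := by
    intro g
    rw [hχ_apply, hrepr, Finset.mul_sum]
    push_cast
    refine Finset.sum_congr rfl fun i _ => ?_
    rw [hz i]
    ring
  refine ⟨χ, ?_, ?_, ?_⟩
  · intro s hs
    have : (0 : ℚ) ≤ (χ s : ℚ) := by
      rw [hcast]
      exact mul_nonneg (by positivity) (hTpos s hs)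
    exact_mod_cast this
  · intro f hf hfF
    have : ((χ f : ℤ) : ℚ) = 0 := by rw [hcast, hF0 f hf hfF, mul_zero]
    exact_mod_cast this
  · have : (0 : ℚ) < (χ g₀ : ℚ) := by
      rw [hcast]
      positivity
    exact_mod_cast this

end Separation

section Assembly

lemma mem_closure_repr {G : Type} [AddCommGroup G] {T : Finset G} {m : G}
    (hm : m ∈ AddSubmonoid.closure (T : Set G)) :
    ∃ c : G → ℕ, m = ∑ s ∈ T, c s • s := by
  classical
  induction hm using AddSubmonoid.closure_induction with
  | mem x hx =>
    refine ⟨fun g => if g = x then 1 else 0, ?_⟩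
    have : ∀ s ∈ T, (if s = x then 1 else 0 : ℕ) • s = if s = x then s else 0 := by
      intro s _; split <;> simp
    rw [Finset.sum_congr rfl this, Finset.sum_ite_eq' T x (fun s => s),
      if_pos (Finset.mem_coe.mp hx)]
  | zero => exact ⟨0, by simp⟩
  | add x y hx hy ihx ihy =>
    obtain ⟨c1, h1⟩ := ihx
    obtain ⟨c2, h2⟩ := ihy
    exact ⟨c1 + c2, by simp [h1, h2, add_smul, Finset.sum_add_distrib]⟩

/-- Let `F` be a face of a toric monoid `M` (realized as a finitely generated saturated
generating submonoid of its Grothendieck group `G = Mᵍᵖ`, a finitely generated free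
abelian group).  Then there is a linear functional `χ : Mᵍᵖ → ℤ` which is nonnegative on
`M` and vanishes exactly on `F` (among elements of `M`). -/
theorem stmt_2 {G : Type} [AddCommGroup G] [Module.Free ℤ G] [Module.Finite ℤ G]
    (M : AddSubmonoid G)
    (hMgen : AddSubgroup.closure (M : Set G) = ⊤)
    (hMfg : M.FG)
    (hMsat : ∀ (n : ℕ) (x : G), 0 < n → n • x ∈ M → x ∈ M)
    (F : AddSubmonoid G) (hFM : F ≤ M)
    (hface : ∀ a b : G, a ∈ M → b ∈ M → a + b ∈ F → a ∈ F ∧ b ∈ F) :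
    ∃ χ : G →+ ℤ, (∀ m ∈ M, 0 ≤ χ m) ∧ ∀ m ∈ M, (χ m = 0 ↔ m ∈ F) := by
  classical
  obtain ⟨T, hT⟩ := hMfg
  have hTM : ∀ s ∈ T, s ∈ M := fun s hs => hT ▸ AddSubmonoid.subset_closure hs
  have hrep : ∀ m ∈ M, ∃ c : G → ℕ, m = ∑ s ∈ T, c s • s := by
    intro m hm
    rw [← hT] at hm
    exact mem_closure_repr hm
  set Tn : Finset G := T.filter (· ∉ F) with hTn
  have hx : ∀ x : {x // x ∈ Tn}, ∃ χ : G →+ ℤ,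
      (∀ s ∈ T, 0 ≤ χ s) ∧ (∀ f ∈ T, f ∈ F → χ f = 0) ∧ 0 < χ x.1 := fun x =>
    exists_chi_gen M F hface T hTM x.1 (Finset.mem_filter.mp x.2).1
      (Finset.mem_filter.mp x.2).2
  choose χf h1 h2 h3 using hx
  set χ : G →+ ℤ := ∑ x : {x // x ∈ Tn}, χf x with hχ
  have hχapp : ∀ g, χ g = ∑ x : {x // x ∈ Tn}, χf x g := by
    intro g
    rw [hχ, AddMonoidHom.finset_sum_apply]
  have hnonnegM : ∀ (ψ : G →+ ℤ), (∀ s ∈ T, 0 ≤ ψ s) → ∀ m ∈ M, 0 ≤ ψ m := by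
    intro ψ hψ m hm
    obtain ⟨c, rfl⟩ := hrep m hm
    rw [map_sum]
    refine Finset.sum_nonneg fun s hs => ?_
    rw [map_nsmul]
    exact nsmul_nonneg (hψ s hs) _
  refine ⟨χ, ?_, ?_⟩
  · intro m hm
    rw [hχapp]
    exact Finset.sum_nonneg fun x _ => hnonnegM _ (h1 x) m hm
  · intro m hm
    constructor
    · intro hzero
      obtain ⟨c, hc⟩ := hrep m hm
      have heach : ∀ x : {x // x ∈ Tn}, χf x m = 0 := by
        rw [hχapp] at hzero
        intro x
        exact (Finset.sum_eq_zero_iff_of_nonneg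
          (fun y _ => hnonnegM _ (h1 y) m hm)).mp hzero x (Finset.mem_univ x)
      have hcoef : ∀ s ∈ T, s ∉ F → c s = 0 := by
        intro s hs hsF
        set x : {x // x ∈ Tn} := ⟨s, Finset.mem_filter.mpr ⟨hs, hsF⟩⟩ with hxdef
        have h0 : χf x m = 0 := heach x
        rw [hc, map_sum] at h0
        have hterm : ∀ t ∈ T, 0 ≤ χf x (c t • t) := fun t ht => by
          rw [map_nsmul]; exact nsmul_nonneg (h1 x t ht) _
        have hs0 := (Finset.sum_eq_zero_iff_of_nonneg hterm).mp h0 s hs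
        rw [map_nsmul, nsmul_eq_mul] at hs0
        have hpos : 0 < χf x s := h3 x
        rcases mul_eq_zero.mp hs0 with h | h
        · exact_mod_cast h
        · exact absurd h hpos.ne'
      rw [hc]
      refine AddSubmonoid.sum_mem F fun s hs => ?_
      by_cases hsF : s ∈ F
      · exact AddSubmonoid.nsmul_mem F hsF _
      · rw [hcoef s hs hsF, zero_nsmul]
        exact F.zero_mem
    · intro hmF
      obtain ⟨c, hc⟩ := hrep m hm
      have hgenF : ∀ s ∈ T, c s ≠ 0 → s ∈ F :=
        sum_mem_face hface T hTM c (hc ▸ hmF)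
      rw [hχapp]
      refine Finset.sum_eq_zero fun x _ => ?_
      rw [hc, map_sum]
      refine Finset.sum_eq_zero fun s hs => ?_
      by_cases h0 : c s = 0
      · rw [h0, zero_nsmul, map_zero]
      · rw [map_nsmul, h2 x s hs (hgenF s hs h0), smul_zero]

end Assembly
end

section
/- Let F be a face of a toric monoid M, and let φ : Fᵍᵖ → ℤ be a group homomorphism with φ(f) ≥ 0 for all f ∈ F. Then there exists a group homomorphism ψ : Mᵍᵖ → ℤ extending φ such that ψ(m) ≥ 0 for all m ∈ M and ψ(m) > 0 for all m ∈ M \ F. -/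
lemma ratClear {κ : Type} [Fintype κ] (q : κ → ℚ) :
    ∃ (N : ℕ) (z : κ → ℤ), 0 < N ∧ ∀ i, (z i : ℚ) = (N : ℚ) * q i := by
  classical
  refine ⟨∏ i, (q i).den, fun i => (q i).num * ((∏ j, (q j).den) / (q i).den : ℕ), ?_, ?_⟩
  · exact Finset.prod_pos fun i _ => (q i).pos
  · intro i
    have hdvd : (q i).den ∣ ∏ j, (q j).den := Finset.dvd_prod_of_mem _ (Finset.mem_univ i)
    have hden : ((q i).den : ℚ) ≠ 0 := by exact_mod_cast (q i).den_nz
    calc ((((q i).num * ((∏ j, (q j).den) / (q i).den : ℕ) : ℤ)) : ℚ)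
        = (q i).num * (((∏ j, (q j).den) : ℕ) / ((q i).den : ℚ)) := by
          rw [Int.cast_mul, Int.cast_natCast, Nat.cast_div hdvd hden]
      _ = ((∏ j, (q j).den : ℕ) : ℚ) * ((q i).num / (q i).den) := by ring
      _ = _ := by rw [Rat.num_div_den]

lemma gordan_hull {ι κ : Type} [Fintype ι] [Fintype κ] (s : κ → ι → ℤ)
    (H : ∀ a : κ → ℤ, (∀ i, 0 ≤ a i) → ∑ i, a i • s i = 0 → ∀ i, a i = 0) :
    (0 : ι → ℝ) ∉ convexHull ℝ (Set.range (fun i => fun j => (s i j : ℝ))) := by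
  classical
  set sR : κ → ι → ℝ := fun i => fun j => (s i j : ℝ) with hsR
  intro h0
  rw [convexHull_eq_union] at h0
  simp only [Set.mem_iUnion] at h0
  obtain ⟨t, hts, hai, hmem⟩ := h0
  rw [Finset.convexHull_eq] at hmem
  obtain ⟨w, hw0, hw1, hcm⟩ := hmem
  rw [Finset.centerMass_eq_of_sum_1 _ _ hw1] at hcm
  choose g hg using fun y : t => hts y.2
  set sq : κ → ι → ℚ := fun i => fun j => (s i j : ℚ) with hsq
  set Lq : (t → ℚ) →ₗ[ℚ] (ι → ℚ) × ℚ :=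
    { toFun := fun x => (∑ y, x y • sq (g y), ∑ y, x y)
      map_add' := by
        intro x x'
        simp [add_smul, Finset.sum_add_distrib, Prod.ext_iff]
      map_smul' := by
        intro c x
        simp [smul_smul, Finset.smul_sum, Prod.ext_iff, Finset.mul_sum] } with hLq
  have hLqval : ∀ x : t → ℚ, Lq x = (∑ y, x y • sq (g y), ∑ y, x y) := fun _ => rfl
  set b : (ι → ℚ) × ℚ := (0, 1) with hb
  have hwcomb : ∑ y : t, w (y : ι → ℝ) • (y : ι → ℝ) = 0 := by
    rw [Finset.sum_coe_sort t (fun y => w y • y)]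
    simpa using hcm
  have hwsum : ∑ y : t, w (y : ι → ℝ) = 1 := by
    rw [Finset.sum_coe_sort t (fun y => w y)]; exact hw1
  by_cases hmem : b ∈ LinearMap.range Lq
  · obtain ⟨x, hx⟩ := hmem
    rw [hLqval, Prod.ext_iff] at hx
    obtain ⟨hx1, hx2⟩ := hx
    simp only at hx1 hx2
    -- rational relation, coordinatewise
    have hq : ∀ j : ι, ∑ y : t, x y * (s (g y) j : ℚ) = 0 := by
      intro j
      have := congrFun hx1 j
      simpa [hsq, hb, Finset.sum_apply] using this
    have hcoordx : ∀ j : ι, ∑ y : t, (x y : ℝ) * (s (g y) j : ℝ) = 0 := by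
      intro j
      have := congrArg (fun r : ℚ => (r : ℝ)) (hq j)
      push_cast at this
      simpa using this
    have hxcomb : ∑ y : t, (x y : ℝ) • (y : ι → ℝ) = 0 := by
      funext j
      simp only [Finset.sum_apply, Pi.smul_apply, smul_eq_mul, Pi.zero_apply]
      have hy : ∀ y : t, (y : ι → ℝ) j = (s (g y) j : ℝ) := by
        intro y; rw [← hg y]
      simp only [hy]
      exact hcoordx j
    have hxsum : ∑ y : t, (x y : ℝ) = 1 := by
      have := congrArg (fun r : ℚ => (r : ℝ)) hx2
      push_cast at this
      simpa [hb] using this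
    have hdiff : ∀ y : t, w (y : ι → ℝ) - (x y : ℝ) = 0 := by
      have h1 : ∑ y : t, (w (y : ι → ℝ) - (x y : ℝ)) = 0 := by
        rw [Finset.sum_sub_distrib, hwsum, hxsum, sub_self]
      have h2 : ∑ y : t, (w (y : ι → ℝ) - (x y : ℝ)) • (y : ι → ℝ) = 0 := by
        simp only [sub_smul, Finset.sum_sub_distrib, hwcomb, hxcomb, sub_self]
      have := affineIndependent_iff.1 hai Finset.univ
        (fun y => w (y : ι → ℝ) - (x y : ℝ)) h1 h2
      exact fun y => this y (Finset.mem_univ y)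
    have hxnn : ∀ y : t, 0 ≤ x y := by
      intro y
      have h1 : 0 ≤ w (y : ι → ℝ) := hw0 _ y.2
      have h2 := hdiff y
      have : (0 : ℝ) ≤ (x y : ℝ) := by linarith
      exact_mod_cast this
    obtain ⟨N, z, hN, hz⟩ := ratClear x
    have hznn : ∀ y : t, 0 ≤ z y := by
      intro y
      have h1 : (0:ℚ) ≤ (z y : ℚ) := by
        rw [hz y]
        exact mul_nonneg (by positivity) (hxnn y)
      exact_mod_cast h1
    set a : κ → ℤ := fun i => ∑ y ∈ Finset.univ.filter (fun y : t => g y = i), z y with ha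
    have ha0 : ∀ i, 0 ≤ a i := fun i => Finset.sum_nonneg fun y _ => hznn y
    have hrel : ∑ i, a i • s i = 0 := by
      have h2 : ∑ i : κ, a i • s i
          = ∑ i : κ, ∑ y ∈ Finset.univ.filter (fun y : t => g y = i), z y • s (g y) := by
        refine Finset.sum_congr rfl fun i _ => ?_
        rw [ha, Finset.sum_smul]
        exact Finset.sum_congr rfl fun y hy => by rw [(Finset.mem_filter.1 hy).2]
      rw [h2, Finset.sum_fiberwise Finset.univ g (fun y => z y • s (g y))]
      funext j
      simp only [Finset.sum_apply, Pi.smul_apply, smul_eq_mul, Pi.zero_apply]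
      have hcast : ((∑ y : t, z y * s (g y) j : ℤ) : ℚ) = 0 := by
        push_cast
        calc ∑ y : t, (z y : ℚ) * (s (g y) j : ℚ)
            = ∑ y : t, (N : ℚ) * (x y * (s (g y) j : ℚ)) := by
              refine Finset.sum_congr rfl fun y _ => ?_
              rw [hz y]; ring
          _ = (N : ℚ) * ∑ y : t, x y * (s (g y) j : ℚ) := by rw [Finset.mul_sum]
          _ = 0 := by rw [hq j, mul_zero]
      exact_mod_cast hcast
    have hzero := H a ha0 hrel
    have hsum : ∑ y : t, z y = 0 := by
      rw [← Finset.sum_fiberwise Finset.univ g (fun y => z y)]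
      simp only [← ha]
      exact Finset.sum_eq_zero fun i _ => hzero i
    have : ((∑ y : t, z y : ℤ) : ℚ) = (N : ℚ) := by
      push_cast
      calc ∑ y : t, (z y : ℚ) = ∑ y : t, (N:ℚ) * x y := by
            exact Finset.sum_congr rfl fun y _ => hz y
        _ = (N:ℚ) * ∑ y : t, x y := by rw [Finset.mul_sum]
        _ = (N:ℚ) := by rw [hx2]; norm_num
    rw [hsum] at this
    have : (N:ℚ) = 0 := by exact_mod_cast this.symm
    have : N = 0 := by exact_mod_cast this
    omega
  · have hfree : Module.Free ℚ (((ι → ℚ) × ℚ) ⧸ LinearMap.range Lq) :=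
      Module.Free.of_divisionRing _ _
    obtain ⟨ξ, hξb, hξ0⟩ := Submodule.exists_dual_map_eq_bot_of_notMem hmem inferInstance
    have hker : ∀ u : t → ℚ, ξ (Lq u) = 0 := by
      intro u
      have h1 : ξ (Lq u) ∈ (LinearMap.range Lq).map ξ :=
        Submodule.mem_map_of_mem ⟨u, rfl⟩
      rw [hξ0] at h1
      exact (Submodule.mem_bot ℚ).1 h1
    have hline : ∀ y : t, ξ (sq (g y), (1:ℚ)) = 0 := by
      intro y
      have h1 : Lq (Pi.single y (1:ℚ)) = (sq (g y), 1) := by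
        rw [hLqval]
        refine Prod.ext ?_ ?_
        · simp [Pi.single_apply, ite_smul, Finset.sum_ite_eq']
        · simp [Pi.single_apply, Finset.sum_ite_eq']
      rw [← h1]; exact hker _
    set c : ι → ℚ := fun j => ξ (Pi.single j 1, 0) with hc
    set d : ℚ := ξ (0, 1) with hd
    have hdecomp : ∀ v : ι → ℚ, ξ (v, 1) = (∑ j, v j * c j) + d := by
      intro v
      have hv : ((v, (1:ℚ)) : (ι → ℚ) × ℚ)
          = (∑ j, v j • ((Pi.single j 1, 0) : (ι → ℚ) × ℚ)) + ((0:ι → ℚ), 1) := by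
        refine Prod.ext ?_ ?_
        · simp only [Prod.fst_add, Prod.fst_sum, Prod.smul_fst]
          have hsingle : ∀ j : ι, v j • (Pi.single j (1:ℚ) : ι → ℚ) = Pi.single j (v j) :=
            fun j => by rw [← Pi.single_smul, smul_eq_mul, mul_one]
          simp only [hsingle]
          rw [Finset.univ_sum_single, add_zero]
        · simp [Prod.snd_sum]
      rw [hv, map_add, map_sum]
      simp only [map_smul, smul_eq_mul]
      rfl
    have hlineq : ∀ y : t, (∑ j, (s (g y) j : ℚ) * c j) + d = 0 := by
      intro y
      rw [← hdecomp (sq (g y))]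
      exact hline y
    have hlineR : ∀ y : t, (∑ j, ((y : ι → ℝ) j) * ((c j : ℚ) : ℝ)) + ((d : ℚ) : ℝ) = 0 := by
      intro y
      have := congrArg (fun r : ℚ => (r : ℝ)) (hlineq y)
      push_cast at this
      have hy : ∀ j, (y : ι → ℝ) j = (s (g y) j : ℝ) := fun j => by rw [← hg y]
      simp only [hy]
      simpa using this
    have hS : (0:ℝ) = ∑ y : t, w (y:ι → ℝ) *
        ((∑ j, ((y : ι → ℝ) j) * ((c j : ℚ) : ℝ)) + ((d : ℚ) : ℝ)) := by
      rw [Finset.sum_congr rfl fun y _ => by rw [hlineR y, mul_zero]]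
      simp
    have hexp : ∑ y : t, w (y:ι → ℝ) *
        ((∑ j, ((y : ι → ℝ) j) * ((c j : ℚ) : ℝ)) + ((d : ℚ) : ℝ))
        = (∑ j, (∑ y : t, w (y:ι → ℝ) * (y : ι → ℝ) j) * ((c j : ℚ) : ℝ))
          + ((d : ℚ) : ℝ) := by
      simp only [mul_add, Finset.sum_add_distrib, Finset.mul_sum, Finset.sum_mul]
      rw [Finset.sum_comm]
      congr 1
      · exact Finset.sum_congr rfl fun j _ => Finset.sum_congr rfl fun y _ => by ring
      · rw [← Finset.sum_mul, hwsum, one_mul]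
    have hcoordw : ∀ j, ∑ y : t, w (y:ι → ℝ) * (y : ι → ℝ) j = 0 := by
      intro j
      have := congrFun hwcomb j
      simpa [Finset.sum_apply] using this
    rw [hexp] at hS
    simp only [hcoordw, zero_mul, Finset.sum_const_zero, zero_add] at hS
    have : d = 0 := by exact_mod_cast hS.symm
    exact hξb this

lemma gordan {ι κ : Type} [Fintype ι] [Fintype κ] (s : κ → ι → ℤ)
    (H : ∀ a : κ → ℤ, (∀ i, 0 ≤ a i) → ∑ i, a i • s i = 0 → ∀ i, a i = 0) :
    ∃ w : ι → ℤ, ∀ i, 0 < ∑ j, s i j * w j := by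
  classical
  set sR : κ → ι → ℝ := fun i => fun j => (s i j : ℝ) with hsR
  have h0 := gordan_hull s H
  obtain ⟨f, u, hfu, hu0⟩ := geometric_hahn_banach_closed_point
    (convex_convexHull ℝ (Set.range sR)) ((Set.finite_range sR).isClosed_convexHull (𝕜 := ℝ)) h0
  rw [map_zero] at hu0
  -- expand f on coordinates
  set c : ι → ℝ := fun j => -(f (Pi.single j 1)) with hc
  have hfex : ∀ v : ι → ℝ, f v = ∑ j, v j * (-(c j)) := by
    intro v
    have hv : v = ∑ j, v j • (Pi.single j (1:ℝ) : ι → ℝ) := by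
      have hsingle : ∀ j : ι, v j • (Pi.single j (1:ℝ) : ι → ℝ) = Pi.single j (v j) :=
        fun j => by rw [← Pi.single_smul, smul_eq_mul, mul_one]
      simp only [hsingle]
      rw [Finset.univ_sum_single]
    conv_lhs => rw [hv]
    rw [map_sum]
    simp [hc]
  have hkey : ∀ i, (-u) ≤ ∑ j, (s i j : ℝ) * c j := by
    intro i
    have h1 : f (sR i) < u := hfu _ (subset_convexHull ℝ _ (Set.mem_range_self i))
    rw [hfex (sR i)] at h1
    have : -(∑ j, (s i j:ℝ) * (-(c j))) = ∑ j, (s i j:ℝ) * c j := by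
      rw [← Finset.sum_neg_distrib]
      exact Finset.sum_congr rfl fun j _ => by ring
    have h2 : ∑ j, sR i j * (-(c j)) = ∑ j, (s i j:ℝ) * (-(c j)) := rfl
    rw [h2] at h1
    linarith
  set ε : ℝ := -u with hε
  have hεpos : 0 < ε := by simp [hε]; linarith
  set Bd : ℝ := (∑ i : κ, ∑ j : ι, |(s i j : ℝ)|) + 1 with hBd
  have hBd1 : ∀ i, ∑ j : ι, |(s i j : ℝ)| ≤ Bd - 1 := by
    intro i
    rw [hBd]
    simp only [add_sub_cancel_right]
    exact Finset.single_le_sum (f := fun i => ∑ j : ι, |(s i j : ℝ)|)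
      (fun i _ => Finset.sum_nonneg fun j _ => abs_nonneg _) (Finset.mem_univ i)
  have hBdpos : 0 < Bd := by
    rw [hBd]
    have : 0 ≤ ∑ i : κ, ∑ j : ι, |(s i j : ℝ)| :=
      Finset.sum_nonneg fun i _ => Finset.sum_nonneg fun j _ => abs_nonneg _
    linarith
  set δ : ℝ := ε / Bd with hδ
  have hδpos : 0 < δ := div_pos hεpos hBdpos
  choose r hr1 hr2 using fun j : ι => exists_rat_btwn (show c j < c j + δ by linarith)
  have hrq : ∀ i, 0 < ∑ j, (s i j : ℝ) * ((r j : ℚ) : ℝ) := by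
    intro i
    have hsplit : ∑ j, (s i j : ℝ) * ((r j : ℚ) : ℝ)
        = ∑ j, (s i j : ℝ) * c j + ∑ j, (s i j : ℝ) * (((r j : ℚ) : ℝ) - c j) := by
      rw [← Finset.sum_add_distrib]
      exact Finset.sum_congr rfl fun j _ => by ring
    have hbound : ∀ j, (s i j : ℝ) * (((r j : ℚ) : ℝ) - c j) ≥ -(|(s i j : ℝ)| * δ) := by
      intro j
      have h1 : 0 ≤ ((r j : ℚ) : ℝ) - c j := by linarith [hr1 j]
      have h2 : ((r j : ℚ) : ℝ) - c j ≤ δ := by linarith [hr2 j]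
      have := abs_mul (s i j : ℝ) (((r j : ℚ) : ℝ) - c j)
      have h3 : |(s i j : ℝ) * (((r j : ℚ) : ℝ) - c j)| ≤ |(s i j : ℝ)| * δ := by
        rw [this]
        exact mul_le_mul_of_nonneg_left (by rw [abs_of_nonneg h1]; exact h2) (abs_nonneg _)
      linarith [neg_abs_le ((s i j : ℝ) * (((r j : ℚ) : ℝ) - c j))]
    have hsum2 : ∑ j, (s i j : ℝ) * (((r j : ℚ) : ℝ) - c j) ≥ -((Bd - 1) * δ) := by
      calc ∑ j, (s i j : ℝ) * (((r j : ℚ) : ℝ) - c j)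
          ≥ ∑ j, -(|(s i j : ℝ)| * δ) := Finset.sum_le_sum fun j _ => hbound j
        _ = -((∑ j, |(s i j : ℝ)|) * δ) := by
            rw [Finset.sum_mul, ← Finset.sum_neg_distrib]
        _ ≥ -((Bd - 1) * δ) := by
            have := hBd1 i
            have : (∑ j : ι, |(s i j : ℝ)|) * δ ≤ (Bd - 1) * δ :=
              mul_le_mul_of_nonneg_right this (le_of_lt hδpos)
            linarith
    have hBdδ : Bd * δ = ε := by
      rw [hδ]; field_simp
    rw [hsplit]
    have := hkey i
    nlinarith [hδpos]
  obtain ⟨N, z, hN, hz⟩ := ratClear r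
  refine ⟨z, fun i => ?_⟩
  have hcast : (0:ℝ) < ((∑ j, s i j * z j : ℤ) : ℝ) := by
    push_cast
    have : ∀ j, ((z j : ℤ) : ℝ) = (N : ℝ) * ((r j : ℚ) : ℝ) := by
      intro j
      have := congrArg (fun q : ℚ => (q : ℝ)) (hz j)
      push_cast at this
      simpa using this
    calc (0:ℝ) < (N:ℝ) * ∑ j, (s i j : ℝ) * ((r j : ℚ) : ℝ) :=
          mul_pos (by exact_mod_cast hN) (hrq i)
      _ = ∑ j, (s i j:ℝ) * ((z j : ℤ) : ℝ) := by
          rw [Finset.mul_sum]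
          exact Finset.sum_congr rfl fun j _ => by rw [this j]; ring
  exact_mod_cast hcast

set_option maxHeartbeats 1000000 in
/-- Let `F` be a face of a toric monoid `M` (realized as a finitely generated saturated
generating submonoid of its Grothendieck group `G = Mᵍᵖ`, a finitely generated free
abelian group), and let `φ : Fᵍᵖ → ℤ` (where `Fᵍᵖ` is the subgroup of `G` generated by
`F`) be nonnegative on `F`.  Then `φ` extends to `ψ : Mᵍᵖ → ℤ` which is nonnegative on
`M` and strictly positive on `M \ F`. -/
theorem stmt_3 {G : Type} [AddCommGroup G] [Module.Free ℤ G] [Module.Finite ℤ G]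
    (M : AddSubmonoid G)
    (hMgen : AddSubgroup.closure (M : Set G) = ⊤)
    (hMfg : M.FG)
    (hMsat : ∀ (n : ℕ) (x : G), 0 < n → n • x ∈ M → x ∈ M)
    (F : AddSubmonoid G) (hFM : F ≤ M)
    (hface : ∀ a b : G, a ∈ M → b ∈ M → a + b ∈ F → a ∈ F ∧ b ∈ F)
    (φ : AddSubgroup.closure (F : Set G) →+ ℤ)
    (hφ : ∀ (f : G) (hf : f ∈ F), 0 ≤ φ ⟨f, AddSubgroup.subset_closure hf⟩) :
    ∃ ψ : G →+ ℤ,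
      (∀ x : AddSubgroup.closure (F : Set G), ψ x = φ x) ∧
      (∀ m ∈ M, 0 ≤ ψ m) ∧
      (∀ m ∈ M, m ∉ F → 0 < ψ m) := by
  classical
  -- elements of the subgroup closure of a submonoid are differences
  have hdiff : ∀ (x : G), x ∈ AddSubgroup.closure (F : Set G) →
      ∃ a ∈ F, ∃ b ∈ F, x = a - b := by
    intro x hx
    induction hx using AddSubgroup.closure_induction with
    | mem y hy => exact ⟨y, hy, 0, zero_mem F, by simp⟩
    | zero => exact ⟨0, zero_mem F, 0, zero_mem F, by simp⟩
    | add x y _ _ ihx ihy =>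
      obtain ⟨a, ha, b, hb, rfl⟩ := ihx
      obtain ⟨c, hc, d, hd, rfl⟩ := ihy
      exact ⟨a + c, add_mem ha hc, b + d, add_mem hb hd, by abel⟩
    | neg x _ ih =>
      obtain ⟨a, ha, b, hb, rfl⟩ := ih
      exact ⟨b, hb, a, ha, by abel⟩
  -- face is closed under taking "roots" of multiples
  have hFn : ∀ (n : ℕ) (x : G), x ∈ M → n ≠ 0 → n • x ∈ F → x ∈ F := by
    intro n
    induction n with
    | zero => intro x _ hn _; exact absurd rfl hn
    | succ m ih =>
      intro x hxM _ hsm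
      rcases Nat.eq_zero_or_pos m with hm | hm
      · subst hm; simpa using hsm
      · have : (m + 1) • x = x + m • x := by rw [add_nsmul, one_nsmul, add_comm]
        rw [this] at hsm
        exact (hface x (m • x) hxM (AddSubmonoid.nsmul_mem M hxM m) hsm).1
  -- M ∩ Fᵍᵖ ⊆ F
  have hMF : ∀ x ∈ M, x ∈ AddSubgroup.closure (F : Set G) → x ∈ F := by
    intro x hxM hx
    obtain ⟨a, ha, b, hb, rfl⟩ := hdiff x hx
    have h1 : (a - b) + b ∈ F := by simpa using ha
    exact (hface _ b hxM (hFM hb) h1).1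
  set p : Submodule ℤ G := AddSubgroup.toIntSubmodule (AddSubgroup.closure (F : Set G)) with hp
  have hpmem : ∀ x : G, x ∈ p ↔ x ∈ (AddSubgroup.closure (F : Set G)) := fun x => Iff.rfl
  set π : G →ₗ[ℤ] G ⧸ p := p.mkQ with hπ
  haveI hQfin : Module.Finite ℤ (G ⧸ p) :=
    Module.Finite.of_surjective π (Submodule.mkQ_surjective p)
  -- key torsion lemma
  have key : ∀ (n : ℕ) (g : G), n ≠ 0 → n • g ∈ (AddSubgroup.closure (F : Set G)) → g ∈ (AddSubgroup.closure (F : Set G)) := by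
    intro n g hn hng
    obtain ⟨a, ha, b, hb, hab⟩ := hdiff _ hng
    obtain ⟨m, rfl⟩ := Nat.exists_eq_succ_of_ne_zero hn
    have h1 : (m + 1) • (g + b) ∈ F := by
      have he : (m + 1) • (g + b) = a + m • b := by
        rw [smul_add, hab, succ_nsmul]
        abel
      rw [he]
      exact add_mem ha (AddSubmonoid.nsmul_mem F hb m)
    have h2 : g + b ∈ M := hMsat (m+1) (g + b) (Nat.succ_pos m) (hFM h1)
    have h3 : g + b ∈ F := hFn (m+1) (g+b) h2 (Nat.succ_ne_zero m) h1
    have h4 : g = (g + b) - b := by abel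
    rw [h4]
    exact sub_mem (AddSubgroup.subset_closure h3) (AddSubgroup.subset_closure hb)
  haveI hQtf : NoZeroSMulDivisors ℤ (G ⧸ p) := by
    refine ⟨fun {c x} hcx => ?_⟩
    by_cases hc : c = 0
    · exact Or.inl hc
    right
    obtain ⟨g, rfl⟩ := Submodule.mkQ_surjective p x
    have hmem : c • g ∈ (AddSubgroup.closure (F : Set G)) := by
      have h0 : p.mkQ (c • g) = 0 := by rw [map_smul]; exact hcx
      rwa [Submodule.mkQ_apply, Submodule.Quotient.mk_eq_zero] at h0
    have hnat : (c.natAbs : ℤ) • g ∈ (AddSubgroup.closure (F : Set G)) := by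
      rcases Int.natAbs_eq c with h | h
      · rw [← h]; exact hmem
      · have : (c.natAbs : ℤ) • g = -(c • g) := by rw [h]; simp [neg_smul]
        rw [this]; exact neg_mem hmem
    have hg : g ∈ (AddSubgroup.closure (F : Set G)) := by
      refine key c.natAbs g (Int.natAbs_ne_zero.2 hc) ?_
      rwa [natCast_zsmul] at hnat
    rw [Submodule.mkQ_apply, Submodule.Quotient.mk_eq_zero]
    exact hg
  haveI hQfree : Module.Free ℤ (G ⧸ p) := Module.free_of_finite_type_torsion_free'
  -- a section of π
  obtain ⟨σ, hσ⟩ := Module.projective_lifting_property π (LinearMap.id)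
    (Submodule.mkQ_surjective p)
  -- the retraction onto (AddSubgroup.closure (F : Set G))
  have hret : ∀ x : G, x - σ (π x) ∈ (AddSubgroup.closure (F : Set G)) := by
    intro x
    have h0 : π (x - σ (π x)) = 0 := by
      rw [map_sub]
      have := LinearMap.congr_fun hσ (π x)
      rw [LinearMap.comp_apply] at this
      rw [this]
      exact sub_self _
    rwa [hπ, Submodule.mkQ_apply, Submodule.Quotient.mk_eq_zero] at h0
  set r : G →+ (AddSubgroup.closure (F : Set G)) :=
    { toFun := fun x => ⟨x - σ (π x), hret x⟩
      map_zero' := by ext; simp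
      map_add' := by intro x y; ext; simp; abel } with hr
  set φ₀ : G →+ ℤ := φ.comp r with hφ₀def
  have hφ₀ : ∀ (x : G) (hx : x ∈ (AddSubgroup.closure (F : Set G))), φ₀ x = φ ⟨x, hx⟩ := by
    intro x hx
    have hπx : π x = 0 := by
      rw [hπ, Submodule.mkQ_apply, Submodule.Quotient.mk_eq_zero]; exact hx
    have : r x = ⟨x, hx⟩ := by
      ext; simp [hr, hπx]
    rw [hφ₀def, AddMonoidHom.comp_apply, this]
  -- generators
  obtain ⟨S, hS⟩ := hMfg
  have hSM : ∀ x ∈ S, x ∈ M := fun x hx => by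
    rw [← hS]; exact AddSubmonoid.subset_closure hx
  set T : Finset G := S.filter (fun x => x ∉ F) with hT
  have hTM : ∀ x : T, (x : G) ∈ M := fun x => hSM _ (Finset.mem_filter.1 x.2).1
  have hTF : ∀ x : T, (x : G) ∉ F := fun x => (Finset.mem_filter.1 x.2).2
  -- basis of the quotient
  set bQ := Module.Free.chooseBasis ℤ (G ⧸ p) with hbQ
  set sfun : T → Module.Free.ChooseBasisIndex ℤ (G ⧸ p) → ℤ :=
    fun x j => bQ.repr (π (x : G)) j with hsfun
  have H : ∀ a : T → ℤ, (∀ i, 0 ≤ a i) → ∑ i, a i • sfun i = 0 → ∀ i, a i = 0 := by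
    intro a ha hrel i
    by_contra hne
    have h1 : π (∑ y : T, a y • (y : G)) = 0 := by
      have hrepr : bQ.repr (∑ y : T, a y • π (y : G)) = 0 := by
        ext j
        rw [map_sum]
        have hj := congrFun hrel j
        simp only [Finset.sum_apply, Pi.smul_apply, smul_eq_mul, Pi.zero_apply, hsfun] at hj
        simpa [Finsupp.finset_sum_apply] using hj
      have hzero : (∑ y : T, a y • π (y : G)) = 0 :=
        bQ.repr.injective (hrepr.trans (map_zero bQ.repr).symm)
      rw [map_sum]
      simp only [map_smul]
      exact hzero
    have h2 : ∑ y : T, a y • (y : G) ∈ (AddSubgroup.closure (F : Set G)) := by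
      rw [hπ, Submodule.mkQ_apply, Submodule.Quotient.mk_eq_zero] at h1
      exact h1
    have h4 : ∑ y : T, a y • (y : G) = ∑ y : T, (a y).toNat • (y : G) := by
      refine Finset.sum_congr rfl fun y _ => ?_
      rw [← natCast_zsmul, Int.toNat_of_nonneg (ha y)]
    have h3 : ∑ y : T, (a y).toNat • (y : G) ∈ M :=
      AddSubmonoid.sum_mem M fun y _ => AddSubmonoid.nsmul_mem M (hTM y) _
    have h5 : ∑ y : T, (a y).toNat • (y : G) ∈ F := by
      rw [h4] at h2
      exact hMF _ h3 h2
    have h6 : (a i).toNat • (i : G) ∈ F := by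
      rw [← Finset.add_sum_erase _ _ (Finset.mem_univ i)] at h5
      exact (hface _ _ (AddSubmonoid.nsmul_mem M (hTM i) _)
        (AddSubmonoid.sum_mem M fun y _ => AddSubmonoid.nsmul_mem M (hTM y) _) h5).1
    have h7 : (i : G) ∈ F := by
      refine hFn (a i).toNat _ (hTM i) ?_ h6
      have := ha i
      omega
    exact hTF i h7
  obtain ⟨wv, hwv⟩ := gordan sfun H
  set lQ : (G ⧸ p) →ₗ[ℤ] ℤ := ∑ j, wv j • bQ.coord j with hlQdef
  have hlQ : ∀ q : G ⧸ p, lQ q = ∑ j, wv j * bQ.repr q j := by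
    intro q
    rw [hlQdef]
    simp [LinearMap.sum_apply, LinearMap.smul_apply, Module.Basis.coord_apply, smul_eq_mul]
  set ℓ : G →+ ℤ := (lQ.comp π).toAddMonoidHom with hℓ
  have hℓval : ∀ x : G, ℓ x = lQ (π x) := fun x => rfl
  have hℓF : ∀ x ∈ (AddSubgroup.closure (F : Set G)), ℓ x = 0 := by
    intro x hx
    have hπx : π x = 0 := by
      rw [hπ, Submodule.mkQ_apply, Submodule.Quotient.mk_eq_zero]; exact hx
    rw [hℓval, hπx, map_zero]
  have hℓT : ∀ x : T, 1 ≤ ℓ (x : G) := by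
    intro x
    have := hwv x
    have heq : ℓ (x : G) = ∑ j, sfun x j * wv j := by
      rw [hℓval, hlQ]
      exact Finset.sum_congr rfl fun j _ => by rw [mul_comm]
    omega
  set Nc : ℤ := 1 + ∑ x ∈ T, max 0 (-(φ₀ x)) with hNc
  have hNc0 : 0 ≤ Nc := by
    rw [hNc]
    have : (0:ℤ) ≤ ∑ x ∈ T, max 0 (-(φ₀ x)) :=
      Finset.sum_nonneg fun x _ => le_max_left _ _
    linarith
  have hNcx : ∀ x : T, 1 ≤ φ₀ (x : G) + Nc := by
    intro x
    have h1 : max 0 (-(φ₀ (x:G))) ≤ ∑ y ∈ T, max 0 (-(φ₀ y)) :=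
      Finset.single_le_sum (f := fun y => max 0 (-(φ₀ y))) (fun y _ => le_max_left _ _) x.2
    have h2 : -(φ₀ (x:G)) ≤ max 0 (-(φ₀ (x:G))) := le_max_right _ _
    rw [hNc]
    linarith
  set ψ : G →+ ℤ := φ₀ + Nc • ℓ with hψ
  have hψval : ∀ x : G, ψ x = φ₀ x + Nc * ℓ x := fun x => rfl
  have hgen : ∀ x : T, 1 ≤ ψ (x : G) := by
    intro x
    rw [hψval]
    have h1 := hℓT x
    have h2 := hNcx x
    nlinarith [hNc0]
  have hKey : ∀ m ∈ M, 0 ≤ ψ m ∧ (m ∉ F → 1 ≤ ψ m) := by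
    intro m hm
    rw [← hS] at hm
    induction hm using AddSubmonoid.closure_induction with
    | mem x hx =>
      by_cases hxF : x ∈ F
      · have hxgp : x ∈ (AddSubgroup.closure (F : Set G)) := AddSubgroup.subset_closure hxF
        have : ψ x = φ ⟨x, hxgp⟩ := by
          rw [hψval, hℓF x hxgp, mul_zero, add_zero, hφ₀ x hxgp]
        constructor
        · rw [this]; exact hφ x hxF
        · intro hc; exact absurd hxF hc
      · have hxT : x ∈ T := Finset.mem_filter.2 ⟨hx, hxF⟩
        have := hgen ⟨x, hxT⟩
        exact ⟨by linarith, fun _ => this⟩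
    | zero =>
      refine ⟨by simp, fun hc => absurd (zero_mem F) hc⟩
    | add x y hx hy ihx ihy =>
      obtain ⟨hx0, hx1⟩ := ihx
      obtain ⟨hy0, hy1⟩ := ihy
      rw [map_add]
      constructor
      · linarith
      · intro hxy
        by_cases hxF : x ∈ F
        · have hyF : y ∉ F := fun hyF => hxy (add_mem hxF hyF)
          have := hy1 hyF
          linarith
        · have := hx1 hxF
          linarith
  refine ⟨ψ, ?_, fun m hm => (hKey m hm).1, fun m hm hmF => by linarith [(hKey m hm).2 hmF]⟩
  intro x
  have hx : (x : G) ∈ (AddSubgroup.closure (F : Set G)) := x.2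
  rw [hψval, hℓF _ hx, mul_zero, add_zero, hφ₀ _ hx]
end

section
/- Let D be a finite diagram in the category of toric monoids, and let L be the colimit of the induced diagram Dᵍᵖ of Grothendieck groups in the category of finitely generated free abelian groups (i.e., the colimit in abelian groups modulo torsion). Then the colimit of D in the category of toric monoids exists and is the image in L of the direct sum of the objects of D; in particular, colim(D)ᵍᵖ = colim(Dᵍᵖ). -/
open CategoryTheory

/-- Colimits exist in the category of toric monoids.  A finite diagram `D` of toric
monoids is given by: a finite index category `J`, toric monoids `M j` realized as
finitely generated saturated generating submonoids of their Grothendieck groups `G j`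
(finitely generated free abelian groups), and functorial maps.  Let `L` (with cocone
`ψ`) be the colimit of the induced diagram `Dᵍᵖ` in finitely generated free abelian
groups.  Then the image `⨆ j, ψ j (M j)` in `L` of the direct sum of the objects is the
colimit of `D` in toric monoids: it generates `L` (so `colim(D)ᵍᵖ = colim(Dᵍᵖ) = L`),
and any compatible family of maps to a toric monoid `(H, N)` factors uniquely
through it. -/
theorem stmt_4
    (J : Type) [SmallCategory J] [FinCategory J]
    (G : J → Type) [∀ j, AddCommGroup (G j)]
    [∀ j, Module.Free ℤ (G j)] [∀ j, Module.Finite ℤ (G j)]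
    (M : ∀ j, AddSubmonoid (G j))
    -- each `(G j, M j)` is a toric monoid:
    (hgen : ∀ j, AddSubgroup.closure ((M j : Set (G j))) = ⊤)
    (hfg : ∀ j, (M j).FG)
    (hsat : ∀ (j : J) (n : ℕ) (x : G j), 0 < n → n • x ∈ M j → x ∈ M j)
    -- the diagram:
    (f : ∀ {i j : J}, (i ⟶ j) → (G i →+ G j))
    (hf_id : ∀ i, f (𝟙 i) = AddMonoidHom.id (G i))
    (hf_comp : ∀ {i j l : J} (u : i ⟶ j) (v : j ⟶ l), f (u ≫ v) = (f v).comp (f u))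
    (hf_mono : ∀ {i j : J} (u : i ⟶ j), (M i).map (f u) ≤ M j)
    -- `L` is the colimit of `Dᵍᵖ` in finitely generated free abelian groups:
    (L : Type) [AddCommGroup L] [Module.Free ℤ L] [Module.Finite ℤ L]
    (ψ : ∀ j, G j →+ L)
    (hψ : ∀ {i j : J} (u : i ⟶ j), (ψ j).comp (f u) = ψ i)
    (huniv : ∀ (H : Type) [AddCommGroup H] [Module.Free ℤ H] [Module.Finite ℤ H]
      (g : ∀ j, G j →+ H), (∀ {i j : J} (u : i ⟶ j), (g j).comp (f u) = g i) →
      ∃! w : L →+ H, ∀ j, w.comp (ψ j) = g j) :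
    -- the image of the direct sum generates `L`: `colim(D)ᵍᵖ = colim(Dᵍᵖ)`
    AddSubgroup.closure ((⨆ j, (M j).map (ψ j) : AddSubmonoid L) : Set L) = ⊤ ∧
    -- and `(L, ⨆ j, ψ j (M j))` is the colimit of `D` in toric monoids:
    (∀ (H : Type) [AddCommGroup H] [Module.Free ℤ H] [Module.Finite ℤ H]
      (N : AddSubmonoid H), AddSubgroup.closure (N : Set H) = ⊤ → N.FG →
      (∀ (n : ℕ) (x : H), 0 < n → n • x ∈ N → x ∈ N) →
      ∀ (g : ∀ j, G j →+ H), (∀ {i j : J} (u : i ⟶ j), (g j).comp (f u) = g i) →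
      (∀ j, (M j).map (g j) ≤ N) →
      ∃! w : L →+ H, (∀ j, w.comp (ψ j) = g j) ∧
        (⨆ j, (M j).map (ψ j) : AddSubmonoid L).map w ≤ N) := by
  classical
  set S : AddSubgroup L := ⨆ j, (ψ j).range with hSdef
  let S' : Submodule ℤ L := AddSubgroup.toIntSubmodule S
  have hmemS : ∀ (j : J) (x : G j), ψ j x ∈ S := by
    intro j x
    exact le_iSup (fun j => (ψ j).range) j ⟨x, rfl⟩
  have key : ∀ x : L, x ∈ S := by
    let g : ∀ j, G j →+ ↥S' := fun j =>
      (ψ j).codRestrict S'.toAddSubmonoid (fun x => hmemS j x)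
    have hgc : ∀ {i j : J} (u : i ⟶ j), (g j).comp (f u) = g i := by
      intro i j u
      ext x
      exact DFunLike.congr_fun (hψ u) x
    obtain ⟨w, hw, -⟩ := huniv ↥S' g hgc
    have hid : ∀ j, (S'.toAddSubmonoid.subtype.comp w).comp (ψ j) = ψ j := by
      intro j
      ext x
      have := DFunLike.congr_fun (hw j) x
      exact congrArg Subtype.val this
    obtain ⟨u, -, hu⟩ := huniv L ψ (fun {i j} v => hψ v)
    have h1 : S'.toAddSubmonoid.subtype.comp w = u := hu _ hid
    have h2 : AddMonoidHom.id L = u := hu _ (fun j => by ext x; simp)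
    intro x
    have : S'.toAddSubmonoid.subtype (w x) = x :=
      (DFunLike.congr_fun h1 x).trans (DFunLike.congr_fun h2 x).symm
    exact this ▸ (w x).2
  constructor
  · rw [eq_top_iff]
    intro x _
    have hle : S ≤ AddSubgroup.closure
        ((⨆ j, (M j).map (ψ j) : AddSubmonoid L) : Set L) := by
      refine iSup_le fun j => ?_
      rintro y ⟨z, rfl⟩
      have hz : z ∈ AddSubgroup.closure ((M j : Set (G j))) := by
        rw [hgen j]; trivial
      have : ψ j z ∈ (AddSubgroup.closure ((M j : Set (G j)))).map (ψ j) :=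
        ⟨z, hz, rfl⟩
      rw [AddMonoidHom.map_closure] at this
      refine AddSubgroup.closure_mono ?_ this
      rintro t ⟨m, hm, rfl⟩
      exact SetLike.mem_coe.mpr
        (AddSubmonoid.mem_iSup_of_mem j ⟨m, hm, rfl⟩)
    exact hle (key x)
  · intro H _ _ _ N hNgen hNfg hNsat g hgc hgN
    obtain ⟨w, hw, hwu⟩ := huniv H g hgc
    refine ⟨w, ⟨hw, ?_⟩, fun y hy => hwu y hy.1⟩
    refine AddSubmonoid.map_le_iff_le_comap.mpr (iSup_le fun j => ?_)
    rintro x ⟨m, hm, rfl⟩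
    have : w (ψ j m) = g j m := DFunLike.congr_fun (hw j) m
    exact AddSubmonoid.mem_comap.mpr (this ▸ hgN j ⟨m, hm, rfl⟩)
end

section
/- Let R be a Noetherian integrally closed domain with fraction field K. Then R equals the intersection, inside K, of the localizations R_𝔭 over all height-one prime ideals 𝔭 of R. -/
/-- A Noetherian integrally closed domain `R` is the intersection, inside its fraction
field `K`, of its localizations at height-one primes.  Membership of `x : K` in the
localization `R_𝔭 ⊆ K` is expressed as: `x` can be written with denominator outside `𝔭`.
"`𝔭` has height one" is expressed as: `𝔭` is a nonzero prime such that the only prime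
strictly contained in it is `⊥`. -/
theorem stmt_7 (R K : Type*) [CommRing R] [IsDomain R] [IsNoetherianRing R]
    [IsIntegrallyClosed R] [Field K] [Algebra R K] [IsFractionRing R K] (x : K) :
    (∃ r : R, algebraMap R K r = x) ↔
      ∀ p : Ideal R, p.IsPrime → p ≠ ⊥ →
        (∀ q : Ideal R, q.IsPrime → q < p → q = ⊥) →
        ∃ a b : R, b ∉ p ∧ algebraMap R K b * x = algebraMap R K a := by
  constructor
  · rintro ⟨r, rfl⟩ p hp _ _
    exact ⟨r, 1, fun h => hp.ne_top (Ideal.eq_top_of_isUnit_mem _ h isUnit_one),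
      by rw [map_one, one_mul]⟩
  · intro H
    by_contra hx
    have inj : Function.Injective (algebraMap R K) := IsFractionRing.injective R K
    obtain ⟨a, b, hb0, rfl⟩ := IsFractionRing.div_surjective (A := R) x
    have hb : (b : R) ≠ 0 := nonZeroDivisors.ne_zero hb0
    have hbK : algebraMap R K b ≠ 0 := fun h => hb (inj (by rw [h, map_zero]))
    set I : Ideal R := Ideal.span {b} with hI
    -- `a ∉ (b)`
    have haI : a ∉ I := by
      intro h
      obtain ⟨r, hr⟩ := Ideal.mem_span_singleton'.mp h
      exact hx ⟨r, by field_simp [← hr, mul_comm]; rw [← hr, map_mul]⟩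
    have haQ : (Ideal.Quotient.mk I a) ≠ 0 := fun h => haI (Ideal.Quotient.eq_zero_iff_mem.mp h)
    obtain ⟨P, hP, hle⟩ :=
      exists_le_isAssociatedPrime_of_isNoetherianRing R (Ideal.Quotient.mk I a) haQ
    obtain ⟨hPp, dbar, hPann⟩ := (isAssociatedPrime_iff).mp hP
    obtain ⟨d, rfl⟩ := Ideal.Quotient.mk_surjective dbar
    -- membership in P
    have memP : ∀ r : R, r ∈ P ↔ r * d ∈ I := by
      intro r
      rw [hPann, Submodule.mem_colon_singleton, Submodule.mem_bot]
      constructor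
      · intro h
        have : Ideal.Quotient.mk I (r * d) = 0 := by
          rw [map_mul]; exact h
        exact Ideal.Quotient.eq_zero_iff_mem.mp this
      · intro h
        show Ideal.Quotient.mk I r * Ideal.Quotient.mk I d = 0
        rw [← map_mul]; exact Ideal.Quotient.eq_zero_iff_mem.mpr h
    have hbP : b ∈ P := (memP b).mpr (Ideal.mem_span_singleton'.mpr ⟨d, by ring⟩)
    have hPbot : P ≠ ⊥ := fun h => hb (by simpa [h] using hbP)
    have hdI : d ∉ I := by
      intro h
      apply hPp.ne_top
      rw [Ideal.eq_top_iff_one, memP]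
      rw [one_mul]; exact h
    -- y = d / b
    set y : K := algebraMap R K d / algebraMap R K b with hy
    have key : ∀ r ∈ P, ∃ s : R, algebraMap R K s = algebraMap R K r * y := by
      intro r hr
      obtain ⟨s, hs⟩ := Ideal.mem_span_singleton'.mp ((memP r).mp hr)
      refine ⟨s, ?_⟩
      rw [← mul_div_assoc, eq_div_iff hbK, ← map_mul, ← map_mul, hs]
    -- y is not integral (else d ∈ (b))
    have hynotint : ¬ IsIntegral R y := by
      intro h
      obtain ⟨c, hc⟩ := IsIntegrallyClosed.isIntegral_iff.mp h
      apply hdI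
      refine Ideal.mem_span_singleton'.mpr ⟨c, ?_⟩
      apply inj
      rw [map_mul]
      rw [hc, hy]
      field_simp
    -- so multiplication by y does not preserve P; get t ∈ P with u := t·y ∈ R \ P
    have : ¬ ∀ t ∈ P, ∀ s : R, algebraMap R K s = algebraMap R K t * y → s ∈ P := by
      intro hmul
      apply hynotint
      refine isIntegral_of_smul_mem_submodule
        (Submodule.map (Algebra.linearMap R K) (P : Submodule R R)) ?_ ?_ y ?_
      · intro h
        apply hbK
        have : algebraMap R K b ∈ (⊥ : Submodule R K) := h ▸ ⟨b, hbP, rfl⟩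
        simpa using this
      · exact Submodule.FG.map _ (IsNoetherian.noetherian _)
      · rintro n ⟨r, hr, rfl⟩
        obtain ⟨s, hs⟩ := key r hr
        have hsP : s ∈ P := hmul r hr s hs
        exact ⟨s, hsP, by simpa [Algebra.linearMap_apply, smul_eq_mul, mul_comm] using hs⟩
    push_neg at this
    obtain ⟨t, htP, u, hu, huP⟩ := this
    -- key multiplicative relation: ∀ r ∈ P, u * r = t * s with s "= r y"
    have rel : ∀ r ∈ P, ∃ s : R, u * r = t * s := by
      intro r hr
      obtain ⟨s, hs⟩ := key r hr
      refine ⟨s, inj ?_⟩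
      rw [map_mul, map_mul, hu, hs]; ring
    -- pass to the localization at P
    letI := hPp
    let Rp := Localization.AtPrime P
    haveI : IsNoetherianRing Rp :=
      IsLocalization.isNoetherianRing P.primeCompl Rp inferInstance
    have huC : u ∈ P.primeCompl := huP
    have uunit : IsUnit (algebraMap R Rp u) := IsLocalization.map_units Rp ⟨u, huC⟩
    set z : Rp := ↑uunit.unit⁻¹ * algebraMap R Rp t with hz
    have hmap : Ideal.map (algebraMap R Rp) P = Ideal.span {z} := by
      apply le_antisymm
      · rw [Ideal.map_le_iff_le_comap]
        intro r hr
        obtain ⟨s, hs⟩ := rel r hr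
        simp only [Ideal.mem_comap]
        rw [Ideal.mem_span_singleton]
        refine ⟨algebraMap R Rp s, ?_⟩
        have : algebraMap R Rp (u * r) = algebraMap R Rp (t * s) := by rw [hs]
        rw [map_mul, map_mul] at this
        calc algebraMap R Rp r
            = ↑uunit.unit⁻¹ * (algebraMap R Rp u * algebraMap R Rp r) := by
              rw [← mul_assoc, IsUnit.val_inv_mul, one_mul]
          _ = ↑uunit.unit⁻¹ * (algebraMap R Rp t * algebraMap R Rp s) := by rw [this]
          _ = z * algebraMap R Rp s := by rw [hz]; ring
      · rw [Ideal.span_le, Set.singleton_subset_iff]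
        exact Ideal.mul_mem_left _ _ (Ideal.mem_map_of_mem _ htP)
    have hmax : IsLocalRing.maximalIdeal Rp = Ideal.span {z} := by
      rw [← Localization.AtPrime.map_eq_maximalIdeal, hmap]
    have hprin : (IsLocalRing.maximalIdeal Rp).IsPrincipal := ⟨⟨z, hmax⟩⟩
    have h43 := ((tfae_of_isNoetherianRing_of_isLocalRing_of_isDomain Rp).out 4 3).mp hprin
    -- P has "height one"
    have hht : ∀ q : Ideal R, q.IsPrime → q < P → q = ⊥ := by
      intro q hq hqP
      by_contra hqbot
      have hdisj : Disjoint ((P.primeCompl : Submonoid R) : Set R) (q : Set R) := by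
        rw [Set.disjoint_iff]
        rintro r ⟨hr1, hr2⟩
        exact hr1 (hqP.le hr2)
      have hQp : (q.map (algebraMap R Rp)).IsPrime :=
        IsLocalization.isPrime_of_isPrime_disjoint P.primeCompl Rp q hq hdisj
      have hco : Ideal.comap (algebraMap R Rp) (q.map (algebraMap R Rp)) = q :=
        IsLocalization.comap_map_of_isPrime_disjoint P.primeCompl Rp hq hdisj
      have hQbot : q.map (algebraMap R Rp) ≠ ⊥ := by
        intro h
        apply hqbot
        rw [← hco, h]
        exact le_bot_iff.mp fun r hr =>
          (Submodule.mem_bot R).mpr <|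
            IsLocalization.injective Rp P.primeCompl_le_nonZeroDivisors
              (by simpa using (Ideal.mem_comap.mp hr))
      have := h43.2 _ hQbot hQp
      have : q = P := by
        rw [← hco, this, ← Localization.AtPrime.map_eq_maximalIdeal,
          (show Ideal.comap (algebraMap R Rp) (P.map (algebraMap R Rp)) = P from
            IsLocalization.comap_map_of_isPrime_disjoint P.primeCompl Rp hPp
            (by rw [Set.disjoint_iff]; rintro r ⟨hr1, hr2⟩; exact hr1 hr2))]
      exact absurd this (ne_of_lt hqP)
    obtain ⟨a', b', hb'P, hab⟩ := H P hPp hPbot hht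
    apply hb'P
    apply hle
    rw [Submodule.mem_colon_singleton, Submodule.mem_bot]
    have : b' * a = a' * b := by
      apply inj
      rw [map_mul, map_mul]
      have := hab
      field_simp at this ⊢
      linear_combination this
    show Ideal.Quotient.mk I b' * Ideal.Quotient.mk I a = 0
    rw [← map_mul, this]
    exact Ideal.Quotient.eq_zero_iff_mem.mpr (Ideal.mem_span_singleton'.mpr ⟨a', rfl⟩)
end

section
/- Let k be a field, X and Y schemes over k, and f : X → Y a k-morphism. Suppose there are open subschemes U ⊆ X and V ⊆ Y such that f restricts to an isomorphism U → V, and suppose X and Y are integral normal Noetherian schemes whose complements X \ U and Y \ V have codimension at least 2. Then f is Stein, i.e., the natural map 𝒪_Y → f_* 𝒪_X is an isomorphism. -/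
open AlgebraicGeometry CategoryTheory Opposite TopologicalSpace

universe u v w

/-- A Noetherian local domain whose maximal ideal is principal has Krull dimension ≤ 1. -/
lemma aux_ringKrullDim_le_one (B : Type u) [CommRing B] [IsDomain B] [IsLocalRing B]
    [IsNoetherianRing B] (x : B) (hm : IsLocalRing.maximalIdeal B = Ideal.span {x}) :
    ringKrullDim B ≤ 1 := by
  have key : ∀ q : Ideal B, q.IsPrime → q ≠ IsLocalRing.maximalIdeal B → q = ⊥ := by
    intro q hq hqm
    have hqle : q ≤ IsLocalRing.maximalIdeal B := IsLocalRing.le_maximalIdeal hq.ne_top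
    have hxq : x ∉ q := by
      intro hxq
      apply hqm
      refine le_antisymm hqle ?_
      rw [hm, Ideal.span_le, Set.singleton_subset_iff]
      exact hxq
    have hsmul : q ≤ IsLocalRing.maximalIdeal B • q := by
      intro a ha
      have : a ∈ Ideal.span {x} := hm ▸ hqle ha
      obtain ⟨c, rfl⟩ := Ideal.mem_span_singleton'.mp this
      have hc : c ∈ q := (hq.mul_mem_iff_mem_or_mem.mp ha).resolve_right hxq
      rw [smul_eq_mul, mul_comm c x]
      exact Ideal.mul_mem_mul (show x ∈ IsLocalRing.maximalIdeal B by
        rw [hm]; exact Ideal.mem_span_singleton_self x) hc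
    have := Submodule.eq_bot_of_le_smul_of_le_jacobson_bot (IsLocalRing.maximalIdeal B) q
      (IsNoetherian.noetherian q) hsmul
      (by rw [IsLocalRing.jacobson_eq_maximalIdeal ⊥ bot_ne_top])
    exact this
  rw [ringKrullDim, Order.krullDim_eq_iSup_length,
    show (1 : WithBot ℕ∞) = ((1 : ℕ∞) : WithBot ℕ∞) from rfl, WithBot.coe_le_coe]
  refine iSup_le fun p => ?_
  have hlen : p.length ≤ 1 := by
    by_contra hlen
    push_neg at hlen
    have h2 : 2 ≤ p.length := hlen
    have h01 : p.toFun ⟨1, by omega⟩ < p.toFun ⟨2, by omega⟩ := by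
      apply p.strictMono
      exact Fin.mk_lt_mk.mpr (by omega)
    have h00 : p.toFun ⟨0, by omega⟩ < p.toFun ⟨1, by omega⟩ := by
      apply p.strictMono
      exact Fin.mk_lt_mk.mpr (by omega)
    have h1bot : (p.toFun ⟨1, by omega⟩).asIdeal = ⊥ := by
      apply key _ (p.toFun ⟨1, by omega⟩).isPrime
      intro he
      have := h01.le
      have hlt : (p.toFun ⟨1, by omega⟩).asIdeal < (p.toFun ⟨2, by omega⟩).asIdeal := h01
      have : (p.toFun ⟨2, by omega⟩).asIdeal ≤ IsLocalRing.maximalIdeal B :=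
        IsLocalRing.le_maximalIdeal (p.toFun ⟨2, by omega⟩).isPrime.ne_top
      rw [he] at hlt
      exact absurd (lt_of_lt_of_le hlt this) (lt_irrefl _)
    have : (p.toFun ⟨0, by omega⟩).asIdeal < (⊥ : Ideal B) := h1bot ▸ h00
    exact absurd this (by simp)
  exact_mod_cast hlen

/-- Algebraic Hartogs: an element of the fraction field of a Noetherian domain which lies
in the localization at every prime of small height (with integrally closed localizations)
is in the ring. -/
theorem aux_hartogs {A : Type u} {K : Type v} [CommRing A] [IsDomain A] [IsNoetherianRing A]
    [Field K] [Algebra A K] [IsFractionRing A K] (s : K)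
    (h : ∀ (p : Ideal A) [p.IsPrime],
      ∃ (B : Type w) (_ : CommRing B) (_ : Algebra A B) (_ : IsLocalization p.primeCompl B),
        IsIntegrallyClosed B ∧
        (ringKrullDim B ≤ 1 → ∃ a b : A, b ∉ p ∧ algebraMap A K b * s = algebraMap A K a)) :
    ∃ a : A, algebraMap A K a = s := by
  by_contra hs
  push_neg at hs
  -- the ideal of denominators of `s`
  set I : Ideal A :=
    { carrier := {c | ∃ d : A, algebraMap A K c * s = algebraMap A K d}
      add_mem' := by
        rintro c₁ c₂ ⟨d₁, hd₁⟩ ⟨d₂, hd₂⟩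
        exact ⟨d₁ + d₂, by rw [map_add, map_add, add_mul, hd₁, hd₂]⟩
      zero_mem' := ⟨0, by simp⟩
      smul_mem' := by
        rintro r c ⟨d, hd⟩
        exact ⟨r * d, by rw [smul_eq_mul, map_mul, map_mul, mul_assoc, hd]⟩ } with hIdef
  have memI : ∀ c : A, c ∈ I ↔ ∃ d : A, algebraMap A K c * s = algebraMap A K d := fun c => Iff.rfl
  obtain ⟨⟨a₀, b₀⟩, hmk : IsLocalization.mk' K a₀ b₀ = s⟩ := IsLocalization.mk'_surjective (nonZeroDivisors A) s
  have hb₀I : (b₀ : A) ∈ I := by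
    refine (memI _).mpr ⟨a₀, ?_⟩
    rw [← hmk, mul_comm]
    exact IsLocalization.mk'_spec K a₀ b₀
  have hb₀0 : (b₀ : A) ≠ 0 := nonZeroDivisors.ne_zero b₀.2
  have hInetop : I ≠ ⊤ := by
    rw [Ne, Ideal.eq_top_iff_one, memI]
    rintro ⟨d, hd⟩
    rw [map_one, one_mul] at hd
    exact hs d hd.symm
  -- find an associated prime of A ⧸ I containing I
  haveI := Ideal.Quotient.nontrivial_iff.mpr hInetop
  have hone : (Ideal.Quotient.mk I 1 : A ⧸ I) ≠ 0 := by
    rw [Ne, Ideal.Quotient.eq_zero_iff_mem]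
    exact fun hh => hInetop (Ideal.eq_top_iff_one I |>.mpr hh)
  obtain ⟨p, hp_assoc, hIp⟩ :=
    exists_le_isAssociatedPrime_of_isNoetherianRing A (Ideal.Quotient.mk I 1) hone
  obtain ⟨hp_prime, y, hy⟩ := isAssociatedPrime_iff.mp hp_assoc
  obtain ⟨c, rfl⟩ := Ideal.Quotient.mk_surjective y
  have smul_mk : ∀ r : A, r • (Ideal.Quotient.mk I c) = Ideal.Quotient.mk I (r * c) := by
    intro r
    rfl
  have memp : ∀ r : A, r ∈ p ↔ r * c ∈ I := by
    intro r
    rw [hy, Submodule.mem_colon_singleton, Submodule.mem_bot, smul_mk, Ideal.Quotient.eq_zero_iff_mem]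
  have hIlep : I ≤ p := by
    intro r hr
    exact (memp r).mpr (Ideal.mul_mem_right c I hr)
  have hcI : c ∉ I := by
    intro hcI
    have : (1 : A) ∈ p := (memp 1).mpr (by rwa [one_mul])
    exact hp_prime.ne_top (Ideal.eq_top_iff_one p |>.mpr this)
  -- get the localization model B at p
  haveI := hp_prime
  obtain ⟨B, _, _, _, hIIC, hdim⟩ := h p
  haveI : IsDomain B :=
    IsLocalization.isDomain_of_le_nonZeroDivisors B p.primeCompl_le_nonZeroDivisors
  haveI : IsLocalRing B := IsLocalization.AtPrime.isLocalRing B p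
  haveI : IsNoetherianRing B := IsLocalization.isNoetherianRing p.primeCompl B inferInstance
  have hφinj : Function.Injective (algebraMap A B) :=
    IsLocalization.injective B p.primeCompl_le_nonZeroDivisors
  -- the map B → K
  have hunits : ∀ m : p.primeCompl, IsUnit (algebraMap A K m) := by
    rintro ⟨m, hm⟩
    refine isUnit_iff_ne_zero.mpr ?_
    have hm0 : m ≠ 0 := fun hh => hm (hh ▸ p.zero_mem)
    exact fun hh => hm0 (IsFractionRing.injective A K (by rw [hh, map_zero]))
  letI : Algebra B K := (IsLocalization.lift hunits).toAlgebra
  haveI : IsScalarTower A B K :=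
    IsScalarTower.of_algebraMap_eq fun a => (IsLocalization.lift_eq hunits a).symm
  haveI : IsFractionRing B K :=
    IsFractionRing.isFractionRing_of_isDomain_of_isLocalization p.primeCompl B K
  have hψinj : Function.Injective (algebraMap B K) := IsFractionRing.injective B K
  have tower : ∀ a : A, algebraMap B K (algebraMap A B a) = algebraMap A K a := by
    intro a
    rw [← IsScalarTower.algebraMap_apply]
  set u : K := algebraMap A K c * s with hu
  have hu_not : ∀ v : B, algebraMap B K v ≠ u := by
    intro v hv
    obtain ⟨⟨e, f⟩, hef : IsLocalization.mk' B e f = v⟩ := IsLocalization.mk'_surjective p.primeCompl v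
    have hspec : v * algebraMap A B (f : A) = algebraMap A B e := by
      rw [← hef]; exact IsLocalization.mk'_spec B e f
    have : u * algebraMap A K (f : A) = algebraMap A K e := by
      rw [← hv, ← tower, ← tower, ← map_mul, hspec]
    have hfc : (f : A) * c ∈ I := by
      refine (memI _).mpr ⟨e, ?_⟩
      calc algebraMap A K ((f : A) * c) * s = u * algebraMap A K (f : A) := by
            rw [hu, map_mul]; ring
        _ = algebraMap A K e := this
    exact f.2 ((memp _).mpr hfc)
  -- the maximal ideal
  set m : Ideal B := IsLocalRing.maximalIdeal B with hm
  have hm_map : p.map (algebraMap A B) = m := by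
    rw [← IsLocalization.AtPrime.comap_maximalIdeal B p]
    exact IsLocalization.map_comap p.primeCompl B _
  -- every element of m, multiplied by u, lands in B
  set J : Ideal B :=
    { carrier := {z | ∃ w : B, algebraMap B K w = u * algebraMap B K z}
      add_mem' := by
        rintro z₁ z₂ ⟨w₁, hw₁⟩ ⟨w₂, hw₂⟩
        exact ⟨w₁ + w₂, by rw [map_add, hw₁, hw₂, map_add, mul_add]⟩
      zero_mem' := ⟨0, by simp⟩
      smul_mem' := by
        rintro r z ⟨w, hw⟩
        refine ⟨r * w, ?_⟩
        rw [smul_eq_mul, map_mul, map_mul, hw]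
        ring }
  have hmJ' : m ≤ J := by
    rw [← hm_map, Ideal.map_le_iff_le_comap]
    intro r hr
    obtain ⟨d, hd⟩ := (memI _).mp ((memp r).mp hr)
    refine Ideal.mem_comap.mpr ⟨algebraMap A B d, ?_⟩
    rw [tower, tower, ← hd, hu, map_mul]
    ring
  have hmJ : ∀ z ∈ m, ∃ w : B, algebraMap B K w = u * algebraMap B K z := fun z hz => hmJ' hz
  by_cases hcase : ∀ z ∈ m, ∃ w ∈ m, algebraMap B K w = u * algebraMap B K z
  · -- case 1: u stabilizes m, hence is integral over B, hence in B: contradiction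
    set N : Submodule B K := Submodule.map (Algebra.linearMap B K) m with hN
    have hb₀m : algebraMap A B (b₀ : A) ∈ m := by
      rw [← hm_map]
      exact Ideal.mem_map_of_mem _ (hIlep hb₀I)
    have hNbot : N ≠ ⊥ := by
      rw [Submodule.ne_bot_iff]
      refine ⟨algebraMap B K (algebraMap A B (b₀ : A)), Submodule.mem_map_of_mem hb₀m, ?_⟩
      rw [tower]
      exact fun hh => hb₀0 (IsFractionRing.injective A K (by rw [hh, map_zero]))
    have hNfg : N.FG := (IsNoetherian.noetherian m).map _
    have hstab : ∀ n ∈ N, u • n ∈ N := by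
      rintro n hn
      obtain ⟨z, hz, rfl⟩ := Submodule.mem_map.mp hn
      obtain ⟨w, hwm, hw⟩ := hcase z hz
      exact Submodule.mem_map.mpr ⟨w, hwm, hw⟩
    have hint : IsIntegral B u := isIntegral_of_smul_mem_submodule N hNbot hNfg u hstab
    obtain ⟨v, hv⟩ := IsIntegrallyClosed.isIntegral_iff.mp hint
    exact hu_not v hv
  · -- case 2: m is principal, so dim B ≤ 1, so s ∈ B_p by hypothesis: contradiction
    push_neg at hcase
    obtain ⟨z₀, hz₀m, hz₀⟩ := hcase
    obtain ⟨w₀, hw₀⟩ := hmJ z₀ hz₀m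
    have hw₀u : IsUnit w₀ := by
      by_contra hwu
      exact hz₀ w₀ (IsLocalRing.mem_maximalIdeal w₀ |>.mpr hwu) hw₀
    obtain ⟨w₀', hw₀'⟩ := isUnit_iff_exists_inv.mp hw₀u
    have hm_span : m = Ideal.span {z₀} := by
      refine le_antisymm ?_ ?_
      · intro z hz
        obtain ⟨w, hw⟩ := hmJ z hz
        have hkey : w₀ * z = w * z₀ := by
          apply hψinj
          rw [map_mul, map_mul, hw₀, hw]
          ring
        refine Ideal.mem_span_singleton'.mpr ⟨w₀' * w, ?_⟩
        calc w₀' * w * z₀ = w₀' * (w * z₀) := by ring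
          _ = w₀' * (w₀ * z) := by rw [hkey]
          _ = (w₀ * w₀') * z := by ring
          _ = z := by rw [hw₀', one_mul]
      · rw [Ideal.span_le, Set.singleton_subset_iff]
        exact hz₀m
    obtain ⟨a, b, hbp, hab⟩ := hdim (aux_ringKrullDim_le_one B z₀ hm_span)
    obtain ⟨binv, hbinv⟩ := isUnit_iff_exists_inv.mp (IsLocalization.map_units B (⟨b, hbp⟩ : p.primeCompl))
    apply hu_not (algebraMap A B (c * a) * binv)
    have hbK : algebraMap A K b ≠ 0 := by
      intro hh
      have : b = 0 := IsFractionRing.injective A K (by rw [hh, map_zero])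
      exact hbp (this ▸ p.zero_mem)
    apply mul_right_cancel₀ hbK
    have : algebraMap B K binv * algebraMap A K b = 1 := by
      rw [← tower, ← map_mul, mul_comm binv _, hbinv, map_one]
    calc algebraMap B K (algebraMap A B (c * a) * binv) * algebraMap A K b
        = algebraMap A K (c * a) * (algebraMap B K binv * algebraMap A K b) := by
          rw [map_mul, tower]; ring
      _ = algebraMap A K (c * a) := by rw [this, mul_one]
      _ = algebraMap A K c * (algebraMap A K b * s) := by rw [hab, map_mul]
      _ = u * algebraMap A K b := by rw [hu]; ring

theorem aux_affine_extend {Y : Scheme.{u}} [IsIntegral Y]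
    (hnorm : ∀ y : Y, IsIntegrallyClosed (Y.presheaf.stalk y))
    (U : Y.Opens) [Nonempty U] (s : Γ(Y, U))
    (W : Y.Opens) (hW : IsAffineOpen W) [Nonempty W] [IsNoetherianRing Γ(Y, W)]
    (h2 : ∀ y : Y, y ∈ W → y ∉ U → 2 ≤ ringKrullDim (Y.presheaf.stalk y)) :
    ∃ t : Γ(Y, W), Y.germToFunctionField W t = Y.germToFunctionField U s := by
  haveI := functionField_isFractionRing_of_isAffineOpen Y W hW
  have main := aux_hartogs (A := Γ(Y, W)) (K := Y.functionField)
    (Y.germToFunctionField U s) ?_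
  · obtain ⟨t, ht⟩ := main
    exact ⟨t, ht⟩
  · intro p hp
    set pp : PrimeSpectrum Γ(Y, W) := ⟨p, hp⟩ with hpp
    set y : Y := hW.fromSpec.base pp with hydef
    have hyW : y ∈ W := by
      have : y ∈ Set.range hW.fromSpec.base := ⟨pp, rfl⟩
      rwa [hW.range_fromSpec] at this
    letI := TopCat.Presheaf.algebra_section_stalk Y.presheaf (⟨y, hyW⟩ : W)
    haveI hloc : IsLocalization.AtPrime (Y.presheaf.stalk y) p :=
      hW.isLocalization_stalk' pp hyW
    refine ⟨Y.presheaf.stalk y, inferInstance, inferInstance, hloc, hnorm y, ?_⟩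
    intro hdim
    have hyU : y ∈ U := by
      by_contra hyU
      have h2' := h2 y hyW hyU
      have : (2 : WithBot ℕ∞) ≤ 1 := le_trans h2' hdim
      norm_num at this
    haveI := functionField_isScalarTower Y W ⟨y, hyW⟩
    set g : Y.presheaf.stalk y := Y.presheaf.germ U y hyU s with hg
    obtain ⟨⟨a, b⟩, hab : (IsLocalization.mk' _ a b : Y.presheaf.stalk y) = g⟩ := IsLocalization.mk'_surjective p.primeCompl g
    refine ⟨a, b, b.2, ?_⟩
    have hspec : g * algebraMap Γ(Y, W) (Y.presheaf.stalk y) (b : Γ(Y, W)) =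
        algebraMap Γ(Y, W) (Y.presheaf.stalk y) a := by
      rw [← hab]
      exact IsLocalization.mk'_spec _ a b
    have hσ : algebraMap (Y.presheaf.stalk y) Y.functionField g =
        Y.germToFunctionField U s := by
      exact TopCat.Presheaf.germ_stalkSpecializes_apply Y.presheaf hyU
        (show genericPoint Y.toPresheafedSpace ⤳ y from
          (genericPoint_spec Y.toPresheafedSpace).specializes trivial) s
    have := congrArg (algebraMap (Y.presheaf.stalk y) Y.functionField) hspec
    rw [map_mul, hσ, ← IsScalarTower.algebraMap_apply, ← IsScalarTower.algebraMap_apply] at this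
    rw [mul_comm] at this
    exact this

theorem aux_extend {Y : Scheme.{u}} [IsIntegral Y] [IsNoetherian Y]
    (hnorm : ∀ y : Y, IsIntegrallyClosed (Y.presheaf.stalk y))
    (U W : Y.Opens) (hUW : U ≤ W)
    (h2 : ∀ y : Y, y ∈ W → y ∉ U → 2 ≤ ringKrullDim (Y.presheaf.stalk y))
    (s : Γ(Y, U)) :
    ∃ t : Γ(Y, W), Y.presheaf.map (homOfLE hUW).op t = s := by
  by_cases hWbot : W = ⊥
  · have hUbot : U = ⊥ := le_bot_iff.mp (hWbot ▸ hUW)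
    subst hWbot
    subst hUbot
    refine ⟨s, ?_⟩
    have : (homOfLE hUW) = 𝟙 (⊥ : Y.Opens) := rfl
    rw [this, op_id, Y.presheaf.map_id]
    rfl
  · have hWne : Set.Nonempty (W : Set Y) := (Opens.ne_bot_iff_nonempty W).mp hWbot
    have hηW : genericPoint Y ∈ W :=
      ((genericPoint_spec Y).mem_open_set_iff W.2).mpr (by simpa using hWne)
    have hηU : genericPoint Y ∈ U := by
      by_contra hηU
      have h2' := h2 _ hηW hηU
      have hfield : ringKrullDim (Y.presheaf.stalk (genericPoint Y)) = 0 :=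
        ringKrullDim_eq_zero_of_field _
      rw [hfield] at h2'
      norm_num at h2'
    haveI : Nonempty U := ⟨⟨_, hηU⟩⟩
    have hex : ∀ x : W, ∃ (Wx : Y.Opens) (tx : Γ(Y, Wx)) (_ : x.1 ∈ Wx) (_ : Wx ≤ W)
        (hη : genericPoint Y ∈ Wx),
        Y.presheaf.germ Wx _ hη tx = Y.presheaf.germ U _ hηU s := by
      intro x
      obtain ⟨Wx, hWxaff, hxWx, hWxW⟩ :=
        Opens.isBasis_iff_nbhd.mp Y.isBasis_affineOpens x.2
      haveI : Nonempty Wx := ⟨⟨x.1, hxWx⟩⟩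
      haveI : IsNoetherianRing Γ(Y, Wx) :=
        IsLocallyNoetherian.component_noetherian ⟨Wx, hWxaff⟩
      obtain ⟨t, ht⟩ := aux_affine_extend hnorm U s Wx hWxaff
        (fun y hyW hyU => h2 y (hWxW hyW) hyU)
      have hWxne : Set.Nonempty (Wx : Set Y) := ⟨x.1, hxWx⟩
      have hη : genericPoint Y ∈ Wx :=
        ((genericPoint_spec Y).mem_open_set_iff Wx.2).mpr (by simpa using hWxne)
      exact ⟨Wx, t, hxWx, hWxW, hη, ht⟩
    choose Wx tx hmem hle hη hgerm using hex
    have hcover : W ≤ iSup Wx := fun w hw => Opens.mem_iSup.mpr ⟨⟨w, hw⟩, hmem ⟨w, hw⟩⟩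
    have hcompat : TopCat.Presheaf.IsCompatible Y.sheaf.1 Wx tx := by
      intro i j
      haveI : Nonempty ((Wx i ⊓ Wx j : Y.Opens) : Set Y) := ⟨⟨_, ⟨hη i, hη j⟩⟩⟩
      apply germ_injective_of_isIntegral Y (genericPoint Y) (⟨hη i, hη j⟩ : _ ∈ Wx i ⊓ Wx j)
      erw [TopCat.Presheaf.germ_res_apply, TopCat.Presheaf.germ_res_apply]
      rw [hgerm i, hgerm j]
    obtain ⟨t, ht, -⟩ := Y.sheaf.existsUnique_gluing' Wx W (fun x => homOfLE (hle x))
      hcover tx hcompat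
    refine ⟨t, germ_injective_of_isIntegral Y (genericPoint Y) hηU ?_⟩
    erw [TopCat.Presheaf.germ_res_apply]
    have h1 := ht ⟨genericPoint Y, hηW⟩
    have h2' := hgerm ⟨genericPoint Y, hηW⟩
    rw [← h2', ← h1]
    erw [TopCat.Presheaf.germ_res_apply]

lemma aux_subsingleton (Y : Scheme.{u}) : Subsingleton Γ(Y, ⊥) := by
  constructor
  intro a b
  obtain ⟨t, -, ht⟩ := Y.sheaf.existsUnique_gluing' (ι := PEmpty.{u+1}) (fun x => x.elim) ⊥
    (fun x => x.elim) bot_le (fun x => x.elim) (fun i => i.elim)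
  exact (ht a (fun i => i.elim)).trans (ht b (fun i => i.elim)).symm

/-- Corollary 3.9 of the paper for schemes: let `f : X ⟶ Y` be a morphism of integral
normal Noetherian `k`-schemes which restricts to an isomorphism `f⁻¹(V) → V` over an open
`V ⊆ Y`, such that the complements of `f⁻¹(V)` and `V` have codimension at least 2 (all
points outside have local ring of Krull dimension `≥ 2`).  Then `f` is Stein:
the natural map `𝒪_Y → f_* 𝒪_X` is an isomorphism. -/
theorem stmt_10 {k : Type} [Field k] {X Y : Scheme} (f : X ⟶ Y)
    (sX : X ⟶ Spec (CommRingCat.of k)) (sY : Y ⟶ Spec (CommRingCat.of k))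
    (hcomm : f ≫ sY = sX)
    [IsIntegral X] [IsIntegral Y] [IsNoetherian X] [IsNoetherian Y]
    (hXnormal : ∀ x : X, IsIntegrallyClosed (X.presheaf.stalk x))
    (hYnormal : ∀ y : Y, IsIntegrallyClosed (Y.presheaf.stalk y))
    (V : Y.Opens) (hiso : IsIso (f ∣_ V))
    (hX2 : ∀ x : X, x ∉ f ⁻¹ᵁ V → 2 ≤ ringKrullDim (X.presheaf.stalk x))
    (hY2 : ∀ y : Y, y ∉ V → 2 ≤ ringKrullDim (Y.presheaf.stalk y)) :
    IsIso f.toLRSHom.c := by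
  -- the generic point of Y lies in V
  have hηV : genericPoint Y ∈ V := by
    by_contra h
    have h2' := hY2 _ h
    have hfield : ringKrullDim (Y.presheaf.stalk (genericPoint Y)) = 0 :=
      ringKrullDim_eq_zero_of_field _
    rw [hfield] at h2'
    norm_num at h2'
  -- f.app is bijective on all opens contained in V
  have hiso_app : ∀ (W' : Y.Opens), W' ≤ V → Function.Bijective (f.app W') := by
    intro W' hle
    have h0 : IsIso ((f ∣_ V).app (V.ι ⁻¹ᵁ W')) := inferInstance
    rw [morphismRestrict_app'] at h0
    have hb0 := (ConcreteCategory.isIso_iff_bijective _).mp h0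
    have e1 : V.ι ''ᵁ (V.ι ⁻¹ᵁ W') = W' := by
      rw [Scheme.Hom.image_preimage_eq_opensRange_inf, Scheme.Opens.opensRange_ι]
      exact inf_eq_right.mpr hle
    have e2 := image_morphismRestrict_preimage f V (V.ι ⁻¹ᵁ W')
    rw [e1] at e2
    have hb1 := (f.appLE_congr _ e1 e2 (fun g => Function.Bijective g)).mp hb0
    rwa [Scheme.Hom.appLE_eq_app] at hb1
  -- surjectivity of (f ∣_ V).base
  have hsurj : Function.Surjective ((f ∣_ V).base) := by
    have : IsIso ((f ∣_ V).base) := by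
      show IsIso (Scheme.forgetToTop.map (f ∣_ V))
      infer_instance
    exact (TopCat.homeoOfIso (asIso ((f ∣_ V).base))).surjective
  have key : ∀ W : Y.Opens, Function.Bijective (f.app W) := by
    intro W
    by_cases hWbot : W = ⊥
    · subst hWbot
      haveI h1 : Subsingleton Γ(Y, (⊥ : Y.Opens)) := aux_subsingleton Y
      haveI h2 : Subsingleton Γ(X, f ⁻¹ᵁ (⊥ : Y.Opens)) := by
        have hb : f ⁻¹ᵁ (⊥ : Y.Opens) = ⊥ := by
          ext1
          simp
        rw [hb]
        exact aux_subsingleton X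
      exact ⟨fun a b _ => Subsingleton.elim a b, fun t => ⟨0, Subsingleton.elim _ _⟩⟩
    · have hWne : Set.Nonempty (W : Set Y) := (Opens.ne_bot_iff_nonempty W).mp hWbot
      have hηW : genericPoint Y ∈ W :=
        ((genericPoint_spec Y).mem_open_set_iff W.2).mpr (by simpa using hWne)
      set W' : Y.Opens := W ⊓ V with hW'def
      have hηW' : genericPoint Y ∈ W' := ⟨hηW, hηV⟩
      haveI : Nonempty W' := ⟨⟨_, hηW'⟩⟩
      have hbij' : Function.Bijective (f.app W') := hiso_app W' inf_le_right
      -- a point of X below the generic point of Y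
      obtain ⟨x', hx'⟩ := hsurj ⟨genericPoint Y, hηV⟩
      have hfx' : f.base x'.1 = genericPoint Y := by
        rw [← morphismRestrict_base_coe f V x', hx']
      have hx₀ : x'.1 ∈ f ⁻¹ᵁ W' := by
        show f.base x'.1 ∈ W'
        rw [hfx']
        exact hηW'
      have hpre : f ⁻¹ᵁ W' ≤ f ⁻¹ᵁ W := fun z hz => hz.1
      have hinjY : Function.Injective
          (Y.presheaf.map (homOfLE (inf_le_left : W' ≤ W)).op) :=
        map_injective_of_isIntegral Y _
      haveI : Nonempty (f ⁻¹ᵁ W') := ⟨⟨x'.1, hx₀⟩⟩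
      have hinjX : Function.Injective (X.presheaf.map (homOfLE hpre).op) :=
        map_injective_of_isIntegral X _
      -- naturality square
      have hnat : f.app W ≫ X.presheaf.map (homOfLE hpre).op
          = Y.presheaf.map (homOfLE (inf_le_left : W' ≤ W)).op ≫ f.app W' := by
        rw [Scheme.Hom.app_eq_appLE, Scheme.Hom.appLE_map,
          Scheme.Hom.app_eq_appLE, Scheme.Hom.map_appLE]
      have hsq : ∀ a : Γ(Y, W), X.presheaf.map (homOfLE hpre).op (f.app W a)
          = f.app W' (Y.presheaf.map (homOfLE (inf_le_left : W' ≤ W)).op a) := by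
        intro a
        have h1 := congrArg (fun (g : Γ(Y, W) ⟶ Γ(X, f ⁻¹ᵁ W')) => g a) hnat
        simp only [comp_apply] at h1
        exact h1
      constructor
      · intro a b hab
        have := congrArg (X.presheaf.map (homOfLE hpre).op) hab
        rw [hsq a, hsq b] at this
        exact hinjY (hbij'.injective this)
      · intro t
        obtain ⟨u, hu⟩ := hbij'.surjective (X.presheaf.map (homOfLE hpre).op t)
        obtain ⟨s, hs⟩ := aux_extend hYnormal W' W inf_le_left
          (fun y hyW hyW' => hY2 y (fun hyV => hyW' ⟨hyW, hyV⟩)) u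
        refine ⟨s, hinjX ?_⟩
        rw [hsq s, hs, hu]
  haveI : ∀ (W : (Opens Y)ᵒᵖ), IsIso (f.toLRSHom.c.app W) := fun W =>
    (ConcreteCategory.isIso_iff_bijective _).mpr (key W.unop)
  exact NatIso.isIso_of_isIso_app f.toLRSHom.c
end
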